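/- arXiv:2005.05697 — 3 statements merged into one kernel-verified Lean document; each statement's English description precedes it below -/
import Mathlib

section
/- Let Γ be a countable discrete group with a measurable action on a probability space (X,ν). Then the action is asymptotically expanding in measure if and only if for every c ∈ (0,1) there exist an increasing sequence (Y_n)_{n∈ℕ} of measurable subsets of X with ν(X ∖ ⋃_n Y_n) = 0 and finite symmetric subsets S_n ⊆ Γ with 1 ∈ S_n such that each Y_n is a domain of (c, S_n)-expansion. -/
open MeasureTheory Set Filter Pointwise
open scoped ENNReal
set_option linter.unusedSectionVars false
set_option maxHeartbeats 1000000

/-- The union `S · A = ⋃ s ∈ S, s • A` of the translates of `A` by elements of the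
finite set `S ⊆ Γ`. -/
def finSMul {Γ X : Type*} [Group Γ] [MulAction Γ X] (S : Finset Γ) (A : Set X) : Set X :=
  ⋃ s ∈ S, s • A

/-- `S` is a finite symmetric subset of `Γ` containing the identity. -/
def SymmFin {Γ : Type*} [Group Γ] (S : Finset Γ) : Prop :=
  (1 : Γ) ∈ S ∧ ∀ s ∈ S, s⁻¹ ∈ S

/-- The `S`-boundary `∂_S A = (S·A) \ A`. -/
def finBdry {Γ X : Type*} [Group Γ] [MulAction Γ X] (S : Finset Γ) (A : Set X) : Set X :=
  finSMul S A \ A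

/-- `Y` is a domain of `(c,S)`-expansion: `ν((S·A) ∩ Y) > (1+c)·ν(A)` for every
measurable `A ⊆ Y` with `0 < ν(A) ≤ ν(Y)/2`. -/
def ExpandsOn {Γ X : Type*} [Group Γ] [MulAction Γ X] [MeasurableSpace X]
    (ν : MeasureTheory.Measure X) (Y : Set X) (c : ℝ) (S : Finset Γ) : Prop :=
  ∀ A : Set X, MeasurableSet A → A ⊆ Y → 0 < ν A → ν A ≤ ν Y / 2 →
    (1 + ENNReal.ofReal c) * ν A < ν (finSMul S A ∩ Y)

/-- `Y` is a domain of expansion: `(c,S)`-expansion for some `c > 0` and some finite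
symmetric `S ∋ 1`. -/
def ExpDomain (Γ : Type*) {X : Type*} [Group Γ] [MulAction Γ X] [MeasurableSpace X]
    (ν : MeasureTheory.Measure X) (Y : Set X) : Prop :=
  ∃ c : ℝ, 0 < c ∧ ∃ S : Finset Γ, SymmFin S ∧ ExpandsOn ν Y c S

/-- The `(α,c,S)` asymptotic-expansion estimate on `Y`: `ν((S·A) ∩ Y) > (1+c)·ν(A)` for
every measurable `A ⊆ Y` with `α·ν(Y) ≤ ν(A) ≤ ν(Y)/2`. -/
def AsymExpandsOn {Γ X : Type*} [Group Γ] [MulAction Γ X] [MeasurableSpace X]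
    (ν : MeasureTheory.Measure X) (Y : Set X) (α c : ℝ) (S : Finset Γ) : Prop :=
  ∀ A : Set X, MeasurableSet A → A ⊆ Y → ENNReal.ofReal α * ν Y ≤ ν A → ν A ≤ ν Y / 2 →
    (1 + ENNReal.ofReal c) * ν A < ν (finSMul S A ∩ Y)

/-- `Y` is a domain of asymptotic expansion. -/
def AsymExpDomain (Γ : Type*) {X : Type*} [Group Γ] [MulAction Γ X] [MeasurableSpace X]
    (ν : MeasureTheory.Measure X) (Y : Set X) : Prop :=
  ∀ α : ℝ, 0 < α → α ≤ 1 / 2 →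
    ∃ c : ℝ, 0 < c ∧ ∃ S : Finset Γ, SymmFin S ∧ AsymExpandsOn ν Y α c S

/-- The action of `Γ` on the probability space `(X,ν)` is strongly ergodic: every almost
invariant sequence of measurable sets is asymptotically trivial. -/
def StronglyErgodic (Γ : Type*) {X : Type*} [Group Γ] [MulAction Γ X] [MeasurableSpace X]
    (ν : MeasureTheory.Measure X) : Prop :=
  ∀ C : ℕ → Set X, (∀ n, MeasurableSet (C n)) →
    (∀ γ : Γ, Filter.Tendsto (fun n => ν (symmDiff (C n) (γ • C n))) Filter.atTop (nhds 0)) →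
    Filter.Tendsto (fun n => ν (C n) * (1 - ν (C n))) Filter.atTop (nhds 0)

/-- The action of `Γ` on `(X,ν)` is measure-class-preserving. -/
def MeasClassPres (Γ : Type*) {X : Type*} [Group Γ] [MulAction Γ X] [MeasurableSpace X]
    (ν : MeasureTheory.Measure X) : Prop :=
  ∀ (γ : Γ) (A : Set X), MeasurableSet A → (ν (γ • A) = 0 ↔ ν A = 0)

/-- The action of `Γ` on `(X,ν)` is ergodic: every invariant measurable set is null or
conull. -/
def ErgodicAct (Γ : Type*) {X : Type*} [Group Γ] [MulAction Γ X] [MeasurableSpace X]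
    (ν : MeasureTheory.Measure X) : Prop :=
  ∀ A : Set X, MeasurableSet A → (∀ γ : Γ, γ • A = A) → ν A = 0 ∨ ν Aᶜ = 0

/-- `W` admits an exhaustion by measurable subsets satisfying `P`. -/
def ExhaustionBy {X : Type*} [MeasurableSpace X] (ν : MeasureTheory.Measure X)
    (W : Set X) (P : Set X → Prop) : Prop :=
  ∃ Y : ℕ → Set X, Monotone Y ∧ (∀ n, MeasurableSet (Y n)) ∧ (∀ n, Y n ⊆ W) ∧
    (∀ n, P (Y n)) ∧ ν (W \ ⋃ n, Y n) = 0

set_option linter.unusedSectionVars false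

open MeasureTheory Set Filter Pointwise
open scoped ENNReal


namespace QSTaux

variable {Γ X : Type*} [Group Γ] [MulAction Γ X]

theorem mem_finSMul {S : Finset Γ} {A : Set X} {x : X} :
    x ∈ finSMul S A ↔ ∃ s ∈ S, ∃ a ∈ A, s • a = x := by
  simp [finSMul, Set.mem_smul_set]

theorem finSMul_mono_set {S : Finset Γ} {A B : Set X} (h : A ⊆ B) :
    finSMul S A ⊆ finSMul S B := by
  intro x hx
  rw [mem_finSMul] at hx ⊢
  obtain ⟨s, hs, a, ha, rfl⟩ := hx
  exact ⟨s, hs, a, h ha, rfl⟩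

theorem finSMul_mono_fin {S T : Finset Γ} (h : S ⊆ T) (A : Set X) :
    finSMul S A ⊆ finSMul T A := by
  intro x hx
  rw [mem_finSMul] at hx ⊢
  obtain ⟨s, hs, a, ha, rfl⟩ := hx
  exact ⟨s, h hs, a, ha, rfl⟩

theorem subset_finSMul {S : Finset Γ} (h1 : (1:Γ) ∈ S) (A : Set X) : A ⊆ finSMul S A := by
  intro x hx
  rw [mem_finSMul]
  exact ⟨1, h1, x, hx, one_smul _ _⟩

theorem finSMul_mul [DecidableEq Γ] (S T : Finset Γ) (A : Set X) :
    finSMul (S * T) A = finSMul S (finSMul T A) := by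
  ext x
  simp only [mem_finSMul, Finset.mem_mul]
  constructor
  · rintro ⟨u, ⟨s, hs, t, ht, rfl⟩, a, ha, rfl⟩
    exact ⟨s, hs, t • a, ⟨t, ht, a, ha, rfl⟩, (mul_smul s t a).symm⟩
  · rintro ⟨s, hs, y, ⟨t, ht, a, ha, rfl⟩, rfl⟩
    exact ⟨s * t, ⟨s, hs, t, ht, rfl⟩, a, ha, mul_smul s t a⟩

theorem finSMul_union (S : Finset Γ) (A B : Set X) :
    finSMul S (A ∪ B) = finSMul S A ∪ finSMul S B := by
  ext x
  simp only [mem_finSMul, Set.mem_union]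
  constructor
  · rintro ⟨s, hs, a, ha | ha, rfl⟩
    · exact Or.inl ⟨s, hs, a, ha, rfl⟩
    · exact Or.inr ⟨s, hs, a, ha, rfl⟩
  · rintro (⟨s, hs, a, ha, rfl⟩ | ⟨s, hs, a, ha, rfl⟩)
    · exact ⟨s, hs, a, Or.inl ha, rfl⟩
    · exact ⟨s, hs, a, Or.inr ha, rfl⟩

theorem finSMul_iUnion (S : Finset Γ) (f : ℕ → Set X) :
    finSMul S (⋃ n, f n) = ⋃ n, finSMul S (f n) := by
  ext x
  simp only [mem_finSMul, Set.mem_iUnion]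
  constructor
  · rintro ⟨s, hs, a, ⟨n, ha⟩, rfl⟩
    exact ⟨n, s, hs, a, ha, rfl⟩
  · rintro ⟨n, s, hs, a, ha, rfl⟩
    exact ⟨s, hs, a, ⟨n, ha⟩, rfl⟩

theorem finSMul_empty (S : Finset Γ) : finSMul S (∅ : Set X) = ∅ := by
  simp [finSMul]

/-- transfer of disjointness across a symmetric set -/
theorem finSMul_inter_empty {S : Finset Γ} (hS : ∀ s ∈ S, s⁻¹ ∈ S) {E D : Set X}
    (h : E ∩ finSMul S D = ∅) : finSMul S E ∩ D = ∅ := by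
  ext x
  simp only [Set.mem_inter_iff, Set.mem_empty_iff_false, iff_false, not_and]
  rintro hx hxD
  rw [mem_finSMul] at hx
  obtain ⟨s, hs, e, he, rfl⟩ := hx
  have : e ∈ E ∩ finSMul S D := by
    refine ⟨he, ?_⟩
    rw [mem_finSMul]
    exact ⟨s⁻¹, hS s hs, s • e, hxD, by simp⟩
  rw [h] at this
  exact this

theorem symmFin_union [DecidableEq Γ] {S T : Finset Γ} (hS : SymmFin S) (hT : SymmFin T) :
    SymmFin (S ∪ T) := by
  refine ⟨Finset.mem_union_left _ hS.1, ?_⟩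
  intro s hs
  rcases Finset.mem_union.1 hs with h | h
  · exact Finset.mem_union_left _ (hS.2 s h)
  · exact Finset.mem_union_right _ (hT.2 s h)

theorem one_mem_pow [DecidableEq Γ] {S : Finset Γ} (h1 : (1:Γ) ∈ S) (k : ℕ) : (1:Γ) ∈ S ^ k := by
  induction k with
  | zero => simp
  | succ n ih =>
    rw [pow_succ]
    simpa using Finset.mul_mem_mul ih h1

theorem symmFin_pow [DecidableEq Γ] {S : Finset Γ} (hS : SymmFin S) (k : ℕ) : SymmFin (S ^ k) := by
  refine ⟨one_mem_pow hS.1 k, ?_⟩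
  induction k with
  | zero => intro s hs; simp_all
  | succ n ih =>
    intro s hs
    rw [pow_succ] at hs
    rw [Finset.mem_mul] at hs
    obtain ⟨b, hb, c, hc, rfl⟩ := hs
    rw [pow_succ']
    rw [mul_inv_rev]
    exact Finset.mul_mem_mul (hS.2 c hc) (ih b hb)

theorem pow_subset_pow_left [DecidableEq Γ] {S T : Finset Γ} (h : S ⊆ T) (k : ℕ) : S ^ k ⊆ T ^ k := by
  induction k with
  | zero => simp
  | succ n ih =>
    rw [pow_succ, pow_succ]
    exact Finset.mul_subset_mul ih h

theorem pow_subset_pow_right [DecidableEq Γ] {S : Finset Γ} (h1 : (1:Γ) ∈ S) {j k : ℕ} (h : j ≤ k) :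
    S ^ j ⊆ S ^ k := by
  induction k with
  | zero => simpa [Nat.le_zero.1 h] using Finset.Subset.refl _
  | succ n ih =>
    rcases Nat.lt_or_ge j (n+1) with hl | hg
    · have hj : S ^ j ⊆ S ^ n := ih (Nat.lt_succ_iff.1 hl)
      intro x hx
      rw [pow_succ]
      have : x = x * 1 := by group
      rw [this]
      exact Finset.mul_mem_mul (hj hx) h1
    · have : j = n + 1 := le_antisymm h hg
      subst this
      exact Finset.Subset.refl _

variable [MeasurableSpace X]

theorem measurableSet_smul (hmeas : ∀ γ : Γ, Measurable fun x : X => γ • x)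
    {A : Set X} (hA : MeasurableSet A) (γ : Γ) : MeasurableSet (γ • A) := by
  have : γ • A = (fun x : X => γ⁻¹ • x) ⁻¹' A := by
    ext x
    simp [Set.mem_smul_set_iff_inv_smul_mem, Set.mem_preimage]
  rw [this]
  exact (hmeas γ⁻¹) hA

theorem measurableSet_finSMul (hmeas : ∀ γ : Γ, Measurable fun x : X => γ • x)
    {A : Set X} (hA : MeasurableSet A) (S : Finset Γ) : MeasurableSet (finSMul S A) := by
  refine MeasurableSet.biUnion S.countable_toSet fun s _ => measurableSet_smul hmeas hA s

end QSTaux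

namespace QSTaux

theorem finSMul_one {Γ X : Type*} [Group Γ] [MulAction Γ X] (A : Set X) :
    finSMul (1 : Finset Γ) A = A := by
  ext x
  simp only [mem_finSMul, Finset.mem_one]
  constructor
  · rintro ⟨s, rfl, a, ha, rfl⟩; simpa using ha
  · intro hx; exact ⟨1, rfl, x, hx, one_smul _ _⟩

section Main

variable {Γ X : Type*} [Group Γ] [MulAction Γ X] [DecidableEq Γ] [MeasurableSpace X]
variable {ν : Measure X} [IsProbabilityMeasure ν]

/-- reshaped global asymptotic expansion hypothesis -/
theorem globalH (h : AsymExpDomain Γ ν Set.univ) {a : ℝ≥0∞} (ha : 0 < a) (ha2 : a ≤ 1/2) :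
    ∃ c : ℝ, 0 < c ∧ ∃ S : Finset Γ, SymmFin S ∧
      ∀ A : Set X, MeasurableSet A → a ≤ ν A → ν A ≤ 1/2 →
        (1 + ENNReal.ofReal c) * ν A < ν (finSMul S A) := by
  have hane : a ≠ ⊤ := ne_top_of_le_ne_top (by norm_num) ha2
  set r : ℝ := a.toReal with hr
  have hr0 : 0 < r := ENNReal.toReal_pos ha.ne' hane
  have hr2 : r ≤ 1/2 := by
    rw [hr]
    calc a.toReal ≤ ((1:ℝ≥0∞)/2).toReal := ENNReal.toReal_mono (by norm_num) ha2
    _ = 1/2 := by norm_num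
  obtain ⟨c, hc, S, hS, hA⟩ := h r hr0 hr2
  refine ⟨c, hc, S, hS, fun A hAm h1 h2 => ?_⟩
  have := hA A hAm (Set.subset_univ A) ?_ ?_
  · rwa [Set.inter_univ] at this
  · rw [measure_univ, mul_one, hr, ENNReal.ofReal_toReal hane]; exact h1
  · rw [measure_univ]; exact h2

/-- Lemma A: amplification of asymptotic expansion -/
theorem lemA (h : AsymExpDomain Γ ν Set.univ)
    (hmeas : ∀ γ : Γ, Measurable fun x : X => γ • x)
    {a : ℝ≥0∞} (ha : 0 < a) (ha2 : a ≤ 1/2) {t : ℝ≥0∞} (ht : t < 1) :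
    ∃ S : Finset Γ, SymmFin S ∧
      ∀ A : Set X, MeasurableSet A → a ≤ ν A → ν A ≤ 1/2 → t < ν (finSMul S A) := by
  -- replace t by max t (1/2)
  set t' : ℝ≥0∞ := max t (1/2) with ht'def
  have ht'1 : t' < 1 := max_lt ht (by norm_num)
  have ht't : t ≤ t' := le_max_left _ _
  set β : ℝ≥0∞ := 1 - t' with hβdef
  have hβ0 : 0 < β := tsub_pos_of_lt ht'1
  have hβhalf : β ≤ 1/2 := by
    calc β ≤ 1 - 1/2 := tsub_le_tsub_left (le_max_right _ _) 1
    _ = 1/2 := by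
      rw [ENNReal.sub_eq_of_eq_add (by norm_num)]
      exact (ENNReal.add_halves 1).symm ▸ by norm_num [ENNReal.add_halves]
  have hβtop : β ≠ ⊤ := ne_top_of_le_ne_top (by norm_num) hβhalf
  set a₀ : ℝ≥0∞ := min a β with ha₀def
  have ha₀0 : 0 < a₀ := lt_min ha hβ0
  have ha₀2 : a₀ ≤ 1/2 := le_trans (min_le_left _ _) ha2
  obtain ⟨c₀, hc₀, S₀, hS₀, Hexp⟩ := globalH h ha₀0 ha₀2
  set κ : ℝ≥0∞ := 1 + ENNReal.ofReal c₀ with hκdef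
  have hκ1 : 1 ≤ κ := le_add_right le_rfl
  have hκr : κ = ENNReal.ofReal (1 + c₀) := by
    rw [ENNReal.ofReal_add zero_le_one hc₀.le, ENNReal.ofReal_one]
  have hκpow : ∀ j : ℕ, κ ^ j = ENNReal.ofReal ((1 + c₀) ^ j) := by
    intro j; rw [hκr, ← ENNReal.ofReal_pow (by linarith)]
  -- growth phase bound, for any measurable A with a ≤ ν A ≤ 1/2
  have growth : ∀ A : Set X, MeasurableSet A → a ≤ ν A → ν A ≤ 1/2 →
      ∀ j : ℕ, min (κ ^ j * ν A) (1/2) ≤ ν (finSMul (S₀ ^ j) A) := by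
    intro A hAm hAa hA2 j
    induction j with
    | zero =>
      simp only [pow_zero, one_mul, finSMul_one]
      exact min_le_left _ _ |>.trans le_rfl
    | succ j ih =>
      have hsub : finSMul (S₀ ^ j) A ⊆ finSMul (S₀ ^ (j+1)) A :=
        finSMul_mono_fin (pow_subset_pow_right hS₀.1 (Nat.le_succ j)) A
      rcases le_or_gt (1/2 : ℝ≥0∞) (ν (finSMul (S₀ ^ j) A)) with hge | hlt
      · exact le_trans (min_le_right _ _) (le_trans hge (measure_mono hsub))
      · have hκj : κ ^ j * ν A ≤ ν (finSMul (S₀ ^ j) A) := by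
          rcases min_le_iff.1 (ih) with h' | h'
          · exact h'
          · exact absurd (lt_of_le_of_lt h' hlt) (lt_irrefl _)
        have hAj : MeasurableSet (finSMul (S₀ ^ j) A) := measurableSet_finSMul hmeas hAm _
        have hAja : a₀ ≤ ν (finSMul (S₀ ^ j) A) :=
          le_trans (min_le_left a β) (le_trans hAa (measure_mono (subset_finSMul (one_mem_pow hS₀.1 j) A)))
        have := Hexp _ hAj hAja hlt.le
        have heq : finSMul S₀ (finSMul (S₀ ^ j) A) = finSMul (S₀ ^ (j+1)) A := by
          rw [← finSMul_mul, ← pow_succ']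
        rw [heq] at this
        calc min (κ ^ (j+1) * ν A) (1/2) ≤ κ ^ (j+1) * ν A := min_le_left _ _
        _ = κ * (κ ^ j * ν A) := by ring
        _ ≤ κ * ν (finSMul (S₀ ^ j) A) := by exact mul_le_mul_right hκj κ
        _ ≤ ν (finSMul (S₀ ^ (j+1)) A) := this.le
  -- choose k with κ^k * a ≥ 1
  have hatop : a ≠ ⊤ := ne_top_of_le_ne_top (by norm_num) ha2
  obtain ⟨k, hk⟩ := pow_unbounded_of_one_lt (1 / a.toReal) (by linarith : (1:ℝ) < 1 + c₀)
  have hka : (1:ℝ≥0∞) ≤ κ ^ k * a := by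
    rw [hκpow, ← ENNReal.ofReal_toReal hatop, ← ENNReal.ofReal_mul (by positivity)]
    rw [← ENNReal.ofReal_one]
    apply ENNReal.ofReal_le_ofReal
    have haR : 0 < a.toReal := ENNReal.toReal_pos ha.ne' hatop
    rw [div_lt_iff₀ haR] at hk
    nlinarith
  -- choose m with κ^m * β > 1/2
  obtain ⟨m, hm⟩ := pow_unbounded_of_one_lt (1 / (2 * β.toReal)) (by linarith : (1:ℝ) < 1 + c₀)
  have hmb : (1/2 : ℝ≥0∞) < κ ^ m * β := by
    rw [hκpow, ← ENNReal.ofReal_toReal hβtop, ← ENNReal.ofReal_mul (by positivity)]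
    have : (1/2 : ℝ≥0∞) = ENNReal.ofReal (1/2) := by
      rw [ENNReal.ofReal_div_of_pos (by norm_num), ENNReal.ofReal_one, ENNReal.ofReal_ofNat]
    rw [this]
    apply ENNReal.ofReal_lt_ofReal_iff_of_nonneg (by norm_num) |>.2
    have hβR : 0 < β.toReal := ENNReal.toReal_pos hβ0.ne' hβtop
    rw [div_lt_iff₀ (by positivity)] at hm
    nlinarith
  refine ⟨S₀ ^ (k + m + 1), symmFin_pow hS₀ _, ?_⟩
  intro A hAm hAa hA2
  -- growth gives ν (finSMul (S₀^k) A) ≥ 1/2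
  have hNk : (1/2 : ℝ≥0∞) ≤ ν (finSMul (S₀ ^ k) A) := by
    have := growth A hAm hAa hA2 k
    have hmin : min (κ ^ k * ν A) (1/2) = (1/2 : ℝ≥0∞) := by
      apply min_eq_right
      calc (1/2 : ℝ≥0∞) ≤ 1 := by norm_num
      _ ≤ κ ^ k * a := hka
      _ ≤ κ ^ k * ν A := mul_le_mul_right hAa _
    rwa [hmin] at this
  -- shrink phase
  set E : ℕ → Set X := fun j => (finSMul (S₀ ^ (k + j)) A)ᶜ with hEdef
  have hEm : ∀ j, MeasurableSet (E j) := fun j => (measurableSet_finSMul hmeas hAm _).compl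
  have hEmono : ∀ j, E (j+1) ⊆ E j := by
    intro j
    exact Set.compl_subset_compl.2 (finSMul_mono_fin (pow_subset_pow_right hS₀.1 (by omega)) A)
  have hEval : ∀ j, ν (E j) = 1 - ν (finSMul (S₀ ^ (k + j)) A) := by
    intro j; exact prob_compl_eq_one_sub (measurableSet_finSMul hmeas hAm _)
  have hSE : ∀ j, finSMul S₀ (E (j+1)) ⊆ E j := by
    intro j
    have hdisj : E (j+1) ∩ finSMul S₀ (finSMul (S₀ ^ (k + j)) A) = ∅ := by
      have : finSMul S₀ (finSMul (S₀ ^ (k + j)) A) = finSMul (S₀ ^ (k + (j+1))) A := by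
        rw [← finSMul_mul, ← pow_succ', Nat.add_assoc]
      rw [this, hEdef]
      exact Set.compl_inter_self _
    have := finSMul_inter_empty hS₀.2 hdisj
    intro x hx
    by_contra hxE
    have hxmem : x ∈ finSMul S₀ (E (j+1)) ∩ finSMul (S₀ ^ (k+j)) A := ⟨hx, not_not.1 (by simpa [hEdef] using hxE)⟩
    rw [this] at hxmem
    exact hxmem
  have claim2 : ∀ j : ℕ, ν (E (j+1)) < β ∨ κ ^ j * ν (E (j+1)) ≤ 1/2 := by
    intro j
    induction j with
    | zero =>
      right
      rw [pow_zero, one_mul, hEval 1]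
      calc 1 - ν (finSMul (S₀ ^ (k+1)) A) ≤ 1 - ν (finSMul (S₀ ^ (k+0)) A) := by
            apply tsub_le_tsub_left
            exact measure_mono (finSMul_mono_fin (pow_subset_pow_right hS₀.1 (by omega)) A)
      _ ≤ 1 - 1/2 := by
            apply tsub_le_tsub_left
            simpa using hNk
      _ = 1/2 := by
            rw [ENNReal.sub_eq_of_eq_add (by norm_num)]
            rw [ENNReal.add_halves]
    | succ j ih =>
      rcases lt_or_ge (ν (E (j+2))) β with hlt | hge
      · exact Or.inl hlt
      · right
        have hEj1 : ν (E (j+1)) ≤ 1/2 := by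
          rcases ih with h' | h'
          · exact absurd (lt_of_le_of_lt (le_trans hge (measure_mono (hEmono (j+1)))) h') (lt_irrefl _)
          · calc ν (E (j+1)) = 1 * ν (E (j+1)) := (one_mul _).symm
            _ ≤ κ ^ j * ν (E (j+1)) := mul_le_mul_left (one_le_pow_of_one_le' hκ1 j) _
            _ ≤ 1/2 := h'
        have hκj : κ ^ j * ν (E (j+1)) ≤ 1/2 := by
          rcases ih with h' | h'
          · exact absurd (lt_of_le_of_lt (le_trans hge (measure_mono (hEmono (j+1)))) h') (lt_irrefl _)
          · exact h'
        have hE2 : ν (E (j+2)) ≤ 1/2 := le_trans (measure_mono (hEmono (j+1))) hEj1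
        have := Hexp _ (hEm (j+2)) (le_trans (min_le_right a β) hge) hE2
        have hle : ν (finSMul S₀ (E (j+2))) ≤ ν (E (j+1)) := measure_mono (hSE (j+1))
        calc κ^(j+1) * ν (E (j+2)) = κ^j * (κ * ν (E (j+2))) := by ring
        _ ≤ κ^j * ν (E (j+1)) := mul_le_mul_right (le_trans this.le hle) _
        _ ≤ 1/2 := hκj
  have hfinal : ν (E (m+1)) < β := by
    rcases claim2 m with h' | h'
    · exact h'
    · by_contra hge
      push_neg at hge
      have : κ ^ m * β ≤ 1/2 := le_trans (mul_le_mul_right hge _) h'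
      exact absurd (lt_of_lt_of_le hmb this) (lt_irrefl _)
  -- conclude
  have hsub : finSMul (S₀ ^ (k + (m+1))) A ⊆ finSMul (S₀ ^ (k + m + 1)) A := by
    apply finSMul_mono_fin (pow_subset_pow_right hS₀.1 (by omega))
  refine lt_of_le_of_lt ht't (lt_of_lt_of_le ?_ (measure_mono hsub))
  have hEv := hEval (m+1)
  have hN1 : ν (finSMul (S₀ ^ (k + (m+1))) A) ≤ 1 := prob_le_one
  -- from ν E < β = 1 - t' deduce t' < ν N
  have : ν (E (m+1)) < 1 - t' := hfinal
  rw [hEv] at this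
  by_contra hc
  push_neg at hc
  have : 1 - ν (finSMul (S₀ ^ (k + (m+1))) A) < 1 - t' := this
  have h2 : 1 - t' ≤ 1 - ν (finSMul (S₀ ^ (k + (m+1))) A) := tsub_le_tsub_left hc 1
  exact absurd (lt_of_le_of_lt h2 this) (lt_irrefl _)



theorem ennEighth : ENNReal.ofReal (1/8 : ℝ) = 1/8 := by
  rw [ENNReal.ofReal_div_of_pos (by norm_num)]; norm_num

theorem ennHalfR : ENNReal.ofReal (1/2 : ℝ) = 1/2 := by
  rw [ENNReal.ofReal_div_of_pos (by norm_num)]; norm_num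

/-- `ExpandsOn` with an `ℝ≥0∞` constant. -/
def ExpE (ν : Measure X) (Y : Set X) (κ : ℝ≥0∞) (S : Finset Γ) : Prop :=
  ∀ A : Set X, MeasurableSet A → A ⊆ Y → 0 < ν A → ν A ≤ ν Y / 2 →
    κ * ν A < ν (finSMul S A ∩ Y)

theorem expandsOn_iff {Y : Set X} {c : ℝ} {S : Finset Γ} :
    ExpandsOn ν Y c S ↔ ExpE ν Y (1 + ENNReal.ofReal c) S := Iff.rfl

/-- Lemma B : a single domain of expansion of almost full measure -/
theorem lemB (h : AsymExpDomain Γ ν Set.univ)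
    (hmeas : ∀ γ : Γ, Measurable fun x : X => γ • x)
    {c₀ : ℝ} (hc₀ : 0 < c₀) (hc₁ : c₀ < 1) {δ : ℝ≥0∞} (hδ : 0 < δ) :
    ∃ (Y : Set X) (S : Finset Γ), MeasurableSet Y ∧ SymmFin S ∧ ν Yᶜ ≤ δ ∧
      ExpE ν Y (1 + ENNReal.ofReal c₀) S := by
  classical
  set κ : ℝ≥0∞ := 1 + ENNReal.ofReal c₀ with hκdef
  have hκr : κ = ENNReal.ofReal (1 + c₀) := by
    rw [ENNReal.ofReal_add zero_le_one hc₀.le, ENNReal.ofReal_one]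
  have hκ2 : κ ≤ 2 := by
    rw [hκr]
    calc ENNReal.ofReal (1 + c₀) ≤ ENNReal.ofReal 2 := ENNReal.ofReal_le_ofReal (by linarith)
    _ = 2 := by norm_num
  set t : ℝ≥0∞ := ENNReal.ofReal ((3 + c₀)/4) with htdef
  have ht1 : t < 1 := by
    rw [htdef, ← ENNReal.ofReal_one]
    exact ENNReal.ofReal_lt_ofReal_iff_of_nonneg (by linarith) |>.2 (by linarith)
  set α : ℝ≥0∞ := min (min (δ/4) (ENNReal.ofReal ((1-c₀)/16))) (1/8) with hαdef
  have hα0 : 0 < α := by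
    refine lt_min (lt_min ?_ ?_) (by norm_num)
    · exact ENNReal.div_pos hδ.ne' (by norm_num)
    · exact ENNReal.ofReal_pos.2 (by linarith)
  have hα8 : α ≤ 1/8 := min_le_right _ _
  have hα2 : α ≤ 1/2 := le_trans hα8 (by
    rw [one_div, one_div]
    exact ENNReal.inv_le_inv.2 (by norm_num))
  have hαδ : α ≤ δ/4 := le_trans (min_le_left _ _) (min_le_left _ _)
  have hαc : α ≤ ENNReal.ofReal ((1-c₀)/16) := le_trans (min_le_left _ _) (min_le_right _ _)
  obtain ⟨S, hS, HS⟩ := lemA h hmeas hα0 hα2 ht1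
  -- key numeric fact : κ * x + 2*α < t whenever x ≤ 1/2
  have hnum : ∀ x : ℝ≥0∞, x ≤ 1/2 → κ * x + 2 * α < t := by
    intro x hx
    calc κ * x + 2 * α ≤ κ * (1/2) + 2 * ENNReal.ofReal ((1-c₀)/16) :=
          add_le_add (mul_le_mul_right hx κ) (mul_le_mul_right hαc 2)
    _ = ENNReal.ofReal ((1 + c₀)/2) + ENNReal.ofReal ((1-c₀)/8) := by
          have hhalf : ((1:ℝ≥0∞)/2) = ENNReal.ofReal (1/2) := by
            rw [ENNReal.ofReal_div_of_pos (by norm_num)]; norm_num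
          congr 1
          · rw [hκr, hhalf, ← ENNReal.ofReal_mul (by linarith)]
            congr 1; ring
          · rw [show (2:ℝ≥0∞) = ENNReal.ofReal 2 from by norm_num,
              ← ENNReal.ofReal_mul (by norm_num)]
            congr 1; ring
    _ = ENNReal.ofReal ((1+c₀)/2 + (1-c₀)/8) := by
          rw [ENNReal.ofReal_add (by linarith) (by linarith)]
    _ < t := by
          rw [htdef]
          exact ENNReal.ofReal_lt_ofReal_iff_of_nonneg (by linarith) |>.2 (by linarith)
  -- the family of non-expanding small sets
  set Φ : Set X → Prop := fun A =>
    MeasurableSet A ∧ ν A ≤ 1/2 ∧ ν (finSMul S A) ≤ κ * ν A with hΦdef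
  have hΦempty : Φ ∅ := ⟨MeasurableSet.empty, by simp, by simp [finSMul_empty]⟩
  have hΦsmall : ∀ A, Φ A → ν A < α := by
    intro A hA
    by_contra hge
    push_neg at hge
    have ht' := HS A hA.1 hge hA.2.1
    have : ν (finSMul S A) ≤ κ * ν A := hA.2.2
    have hlt : κ * ν A + 2*α < t := hnum _ hA.2.1
    have : t < t := lt_of_lt_of_le ht' (le_trans this (le_trans le_self_add hlt.le))
    exact absurd this (lt_irrefl _)
  -- supremum of measures of supersets in Φ
  set s : Set X → ℝ≥0∞ := fun A => ⨆ (C : Set X) (_ : Φ C ∧ A ⊆ C), ν C with hsdef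
  have hs_le : ∀ A, s A ≤ 1/2 := by
    intro A
    refine iSup_le fun C => iSup_le fun hC => hC.1.2.1
  have hs_ne : ∀ A, s A ≠ ⊤ := fun A => ne_top_of_le_ne_top (by norm_num) (hs_le A)
  have step : ∀ (A : Set X), Φ A → ∀ n : ℕ, ∃ B : Set X,
      Φ B ∧ A ⊆ B ∧ s A ≤ ν B + (2⁻¹ : ℝ≥0∞)^n := by
    intro A hA n
    rcases le_or_gt (s A) ((2⁻¹ : ℝ≥0∞)^n) with hle | hlt
    · exact ⟨A, hA, Set.Subset.refl A, le_trans hle le_add_self⟩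
    · have hpos : ((2⁻¹ : ℝ≥0∞)^n) ≠ 0 := pow_ne_zero n (by norm_num)
      have hsA0 : s A ≠ 0 := (lt_of_le_of_lt (zero_le) hlt).ne'
      have hsub : s A - (2⁻¹:ℝ≥0∞)^n < s A :=
        ENNReal.sub_lt_self (hs_ne A) hsA0 hpos
      rw [hsdef] at hsub
      simp only [lt_iSup_iff] at hsub
      obtain ⟨C, hC, hCgt⟩ := hsub
      refine ⟨C, hC.1, hC.2, ?_⟩
      have := hCgt.le
      rwa [tsub_le_iff_right] at this
  choose! F hF1 hF2 hF3 using step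
  set seq : ℕ → Set X := fun n => Nat.rec ∅ (fun n p => F p n) n with hseqdef
  have hseq0 : seq 0 = ∅ := rfl
  have hseqsucc : ∀ n, seq (n+1) = F (seq n) n := fun n => rfl
  have hseqΦ : ∀ n, Φ (seq n) := by
    intro n
    induction n with
    | zero => exact hΦempty
    | succ n ih => rw [hseqsucc]; exact hF1 _ ih n
  have hseqmono : ∀ n, seq n ⊆ seq (n+1) := by
    intro n; rw [hseqsucc]; exact hF2 _ (hseqΦ n) n
  have hseqMono : Monotone seq := monotone_nat_of_le_succ hseqmono
  have hseqs : ∀ n, s (seq n) ≤ ν (seq (n+1)) + (2⁻¹:ℝ≥0∞)^n := by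
    intro n; rw [hseqsucc]; exact hF3 _ (hseqΦ n) n
  set Astar : Set X := ⋃ n, seq n with hAstar
  have hAm : MeasurableSet Astar := MeasurableSet.iUnion (fun n => (hseqΦ n).1)
  have hdir : Directed (fun x1 x2 : Set X => x1 ⊆ x2) seq := hseqMono.directed_le
  have hAν : ν Astar = ⨆ n, ν (seq n) := hdir.measure_iUnion
  have hAΦ : Φ Astar := by
    refine ⟨hAm, ?_, ?_⟩
    · rw [hAν]; exact iSup_le fun n => (hseqΦ n).2.1
    · have : finSMul S Astar = ⋃ n, finSMul S (seq n) := finSMul_iUnion S seq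
      rw [this]
      have hdir2 : Directed (fun x1 x2 : Set X => x1 ⊆ x2) (fun n => finSMul S (seq n)) :=
        (fun m n => by
          obtain ⟨k, h1, h2⟩ := hdir m n
          exact ⟨k, finSMul_mono_set h1, finSMul_mono_set h2⟩)
      rw [hdir2.measure_iUnion, hAν, ENNReal.mul_iSup]
      exact iSup_mono fun n => (hseqΦ n).2.2
  have hmaximal : ∀ C, Φ C → Astar ⊆ C → ν C ≤ ν Astar := by
    intro C hC hsub
    by_contra hgt
    push_neg at hgt
    have hε : ν C - ν Astar ≠ 0 := (tsub_pos_of_lt hgt).ne'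
    obtain ⟨n, hn⟩ := ENNReal.exists_inv_two_pow_lt hε
    have h1 : ν C ≤ s (seq n) := by
      rw [hsdef]
      refine le_iSup_of_le C ?_
      exact le_iSup_of_le ⟨hC, le_trans (le_iSup (fun n => seq n) n) hsub⟩ le_rfl
    have h2 : ν C ≤ ν Astar + (2⁻¹:ℝ≥0∞)^n := by
      refine le_trans h1 (le_trans (hseqs n) ?_)
      exact add_le_add_left (measure_mono (le_iSup (fun n => seq n) (n+1))) _
    have h3 : ν Astar + (2⁻¹:ℝ≥0∞)^n < ν Astar + (ν C - ν Astar) :=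
      ENNReal.add_lt_add_left (measure_ne_top ν _) hn
    rw [add_tsub_cancel_of_le hgt.le] at h3
    exact absurd (lt_of_le_of_lt h2 h3) (lt_irrefl _)
  have hAsmall : ν Astar < α := hΦsmall _ hAΦ
  set Bstar : Set X := finSMul S Astar with hBstar
  have hBν : ν Bstar ≤ 2 * α := by
    calc ν Bstar ≤ κ * ν Astar := hAΦ.2.2
    _ ≤ 2 * α := mul_le_mul' hκ2 hAsmall.le
  refine ⟨Bstarᶜ, S, (measurableSet_finSMul hmeas hAm S).compl, hS, ?_, ?_⟩
  · rw [compl_compl]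
    refine le_trans hBν (le_trans (mul_le_mul_right hαδ 2) ?_)
    rw [div_eq_mul_inv, ← mul_assoc, mul_comm (2:ℝ≥0∞) δ, mul_assoc]
    calc δ * (2 * 4⁻¹) ≤ δ * 1 := by
          apply mul_le_mul_right
          rw [show ((4:ℝ≥0∞))⁻¹ = 1/4 from by rw [one_div]]
          rw [show (1:ℝ≥0∞)/4 = ENNReal.ofReal (1/4) from by
            rw [ENNReal.ofReal_div_of_pos (by norm_num)]; norm_num]
          rw [show (2:ℝ≥0∞) = ENNReal.ofReal 2 from by norm_num,
            ← ENNReal.ofReal_mul (by norm_num), show (1:ℝ≥0∞) = ENNReal.ofReal 1 from by norm_num]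
          exact ENNReal.ofReal_le_ofReal (by norm_num)
    _ = δ := mul_one δ
  · intro B hBm hBY hB0 hB2
    by_contra hfail
    push_neg at hfail
    have hBhalf : ν B ≤ 1/2 := le_trans hB2 (ENNReal.div_le_div_right prob_le_one 2)
    rcases le_or_gt α (ν B) with hge | hlt
    · -- big B : use LemA directly
      have ht' := HS B hBm hge hBhalf
      have hsplit : ν (finSMul S B) ≤ ν (finSMul S B ∩ Bstarᶜ) + ν Bstar := by
        calc ν (finSMul S B) = ν ((finSMul S B ∩ Bstarᶜ) ∪ (finSMul S B ∩ Bstar)) := by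
              rw [← Set.inter_union_distrib_left, Set.compl_union_self, Set.inter_univ]
        _ ≤ ν (finSMul S B ∩ Bstarᶜ) + ν (finSMul S B ∩ Bstar) := measure_union_le _ _
        _ ≤ _ := add_le_add_right (measure_mono Set.inter_subset_right) _
      have : t < κ * ν B + 2 * α := by
        calc t < ν (finSMul S B) := ht'
        _ ≤ ν (finSMul S B ∩ Bstarᶜ) + ν Bstar := hsplit
        _ ≤ κ * ν B + 2*α := add_le_add hfail hBν
      exact absurd (lt_trans this (hnum _ hBhalf)) (lt_irrefl _)
    · -- small B : contradict maximality
      have hBA : Disjoint Astar B := by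
        rw [Set.disjoint_left]
        intro x hxA hxB
        exact (hBY hxB) (subset_finSMul hS.1 Astar hxA)
      have hCν : ν (Astar ∪ B) = ν Astar + ν B := measure_union hBA hBm
      have hCΦ : Φ (Astar ∪ B) := by
        refine ⟨hAm.union hBm, ?_, ?_⟩
        · rw [hCν]
          calc ν Astar + ν B ≤ α + α := add_le_add hAsmall.le hlt.le
          _ ≤ 1/8 + 1/8 := add_le_add hα8 hα8
          _ ≤ 1/2 := by
                rw [← ennEighth, ← ennHalfR, ← ENNReal.ofReal_add (by norm_num) (by norm_num)]
                exact ENNReal.ofReal_le_ofReal (by norm_num)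
        · rw [finSMul_union, hCν]
          calc ν (finSMul S Astar ∪ finSMul S B)
              ≤ ν (Bstar ∪ (finSMul S B ∩ Bstarᶜ)) := by
                apply measure_mono
                intro x hx
                rcases hx with hx | hx
                · exact Or.inl hx
                · by_cases hxB : x ∈ Bstar
                  · exact Or.inl hxB
                  · exact Or.inr ⟨hx, hxB⟩
          _ ≤ ν Bstar + ν (finSMul S B ∩ Bstarᶜ) := measure_union_le _ _
          _ ≤ κ * ν Astar + κ * ν B := add_le_add hAΦ.2.2 hfail
          _ = κ * (ν Astar + ν B) := by ring
      have := hmaximal _ hCΦ Set.subset_union_left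
      rw [hCν] at this
      have hB0' : ν B ≤ 0 := by
        have := ENNReal.add_le_add_iff_left (measure_ne_top ν Astar) |>.1
          (le_trans this (le_add_of_nonneg_right (zero_le)) : ν Astar + ν B ≤ ν Astar + 0)
        exact this
      exact absurd (lt_of_lt_of_le hB0 hB0') (by simp)


/-- iteration of expansion within a domain -/
theorem iterE (hmeas : ∀ γ : Γ, Measurable fun x : X => γ • x)
    {Y : Set X} (hY : MeasurableSet Y) {κ : ℝ≥0∞} {S : Finset Γ} (hS1 : (1:Γ) ∈ S)
    (hexp : ExpE ν Y κ S) {B : Set X} (hBm : MeasurableSet B) (hBY : B ⊆ Y)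
    (hB0 : 0 < ν B) (k : ℕ) :
    min (κ^k * ν B) (ν Y / 2) ≤ ν (finSMul (S^k) B ∩ Y) := by
  induction k with
  | zero =>
    simp only [pow_zero, one_mul, finSMul_one]
    rw [Set.inter_eq_self_of_subset_left hBY]
    exact le_trans (min_le_left _ _) le_rfl
  | succ k ih =>
    have hsub : finSMul (S ^ k) B ∩ Y ⊆ finSMul (S ^ (k+1)) B ∩ Y :=
      Set.inter_subset_inter_left Y (finSMul_mono_fin (pow_subset_pow_right hS1 (Nat.le_succ k)) B)
    rcases le_or_gt (ν Y / 2) (ν (finSMul (S ^ k) B ∩ Y)) with hge | hlt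
    · exact le_trans (min_le_right _ _) (le_trans hge (measure_mono hsub))
    · have hκk : κ ^ k * ν B ≤ ν (finSMul (S ^ k) B ∩ Y) := by
        rcases min_le_iff.1 ih with h' | h'
        · exact h'
        · exact absurd (lt_of_le_of_lt h' hlt) (lt_irrefl _)
      have hAm : MeasurableSet (finSMul (S ^ k) B ∩ Y) :=
        (measurableSet_finSMul hmeas hBm _).inter hY
      have hA0 : 0 < ν (finSMul (S ^ k) B ∩ Y) := by
        refine lt_of_lt_of_le hB0 (measure_mono ?_)
        intro x hx
        exact ⟨subset_finSMul (one_mem_pow hS1 k) B hx, hBY hx⟩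
      have := hexp _ hAm Set.inter_subset_right hA0 hlt.le
      have hsub2 : finSMul S (finSMul (S ^ k) B ∩ Y) ⊆ finSMul (S ^ (k+1)) B := by
        refine Set.Subset.trans (finSMul_mono_set Set.inter_subset_left) ?_
        rw [← finSMul_mul, ← pow_succ']
      calc min (κ ^ (k+1) * ν B) (ν Y / 2) ≤ κ ^ (k+1) * ν B := min_le_left _ _
      _ = κ * (κ ^ k * ν B) := by ring
      _ ≤ κ * ν (finSMul (S ^ k) B ∩ Y) := mul_le_mul_right hκk κ
      _ ≤ ν (finSMul S (finSMul (S ^ k) B ∩ Y) ∩ Y) := this.le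
      _ ≤ ν (finSMul (S ^ (k+1)) B ∩ Y) :=
            measure_mono (Set.inter_subset_inter_left Y hsub2)

/-- the union lemma : Y ∪ Y' is again a domain -/
theorem unionLem (h : AsymExpDomain Γ ν Set.univ)
    (hmeas : ∀ γ : Γ, Measurable fun x : X => γ • x)
    {c : ℝ} (hc : 0 < c) (hc1 : c < 1)
    {Y Y' : Set X} {S S' : Finset Γ}
    (hYm : MeasurableSet Y) (hY'm : MeasurableSet Y')
    (hSsym : SymmFin S) (hS'sym : SymmFin S')
    (hY34 : ENNReal.ofReal (3/4) ≤ ν Y)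
    (hexpY : ExpE ν Y (1 + ENNReal.ofReal c) S)
    (hexpY' : ExpE ν Y' (1 + ENNReal.ofReal ((1+c)/2)) S')
    (hδ'1 : ν Y'ᶜ ≤ ENNReal.ofReal ((1-c)/16)) (hδ'2 : ν Y'ᶜ ≤ ENNReal.ofReal (1/8)) :
    ∃ T : Finset Γ, SymmFin T ∧ ExpE ν (Y ∪ Y') (1 + ENNReal.ofReal c) T := by
  classical
  set κ : ℝ≥0∞ := 1 + ENNReal.ofReal c with hκdef
  set κ₀ : ℝ≥0∞ := 1 + ENNReal.ofReal ((1+c)/2) with hκ₀def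
  have hκr : κ = ENNReal.ofReal (1 + c) := by
    rw [hκdef, ENNReal.ofReal_add zero_le_one hc.le, ENNReal.ofReal_one]
  have hκ₀r : κ₀ = ENNReal.ofReal (1 + (1+c)/2) := by
    rw [hκ₀def, ENNReal.ofReal_add zero_le_one (by linarith), ENNReal.ofReal_one]
  have hκ2 : κ < 2 := by
    rw [hκr, show (2:ℝ≥0∞) = ENNReal.ofReal 2 from by norm_num]
    exact ENNReal.ofReal_lt_ofReal_iff_of_nonneg (by linarith) |>.2 (by linarith)
  have hκ₀4 : (4:ℝ≥0∞) ≤ κ₀ ^ 4 := by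
    rw [hκ₀r, ← ENNReal.ofReal_pow (by linarith)]
    rw [show (4:ℝ≥0∞) = ENNReal.ofReal 4 from by norm_num]
    apply ENNReal.ofReal_le_ofReal
    calc (4:ℝ) ≤ (3/2)^4 := by norm_num
    _ ≤ (1 + (1+c)/2)^4 := pow_le_pow_left₀ (by norm_num) (by linarith) 4
  have hY'ν : ENNReal.ofReal (3/4) ≤ ν Y' := by
    have h1 : ν Y'ᶜᶜ = 1 - ν Y'ᶜ := prob_compl_eq_one_sub hY'm.compl
    rw [compl_compl] at h1
    rw [h1]
    calc ENNReal.ofReal (3/4) = 1 - ENNReal.ofReal (1/4) := by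
          rw [show (1:ℝ≥0∞) = ENNReal.ofReal 1 from by norm_num,
            ← ENNReal.ofReal_sub _ (by norm_num)]
          norm_num
    _ ≤ 1 - ν Y'ᶜ := by
          apply tsub_le_tsub_left
          exact le_trans hδ'2 (ENNReal.ofReal_le_ofReal (by norm_num))
  -- global expansion set from Lemma A
  have hofr8 : (0:ℝ≥0∞) < ENNReal.ofReal (1/8) := ENNReal.ofReal_pos.2 (by norm_num)
  obtain ⟨S'', hS''sym, HS''⟩ := lemA h hmeas hofr8
    (by rw [← ennHalfR]; exact ENNReal.ofReal_le_ofReal (by norm_num))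
    (t := ENNReal.ofReal ((3+c)/4))
    (by rw [show (1:ℝ≥0∞) = ENNReal.ofReal 1 from by norm_num]
        exact ENNReal.ofReal_lt_ofReal_iff_of_nonneg (by linarith) |>.2 (by linarith))
  -- choose the exponent
  obtain ⟨k₂, hk₂⟩ := pow_unbounded_of_one_lt (4:ℝ) (by linarith : (1:ℝ) < 1 + c)
  have hκk₂ : (4:ℝ≥0∞) ≤ κ ^ k₂ := by
    rw [hκr, ← ENNReal.ofReal_pow (by linarith),
      show (4:ℝ≥0∞) = ENNReal.ofReal 4 from by norm_num]
    exact ENNReal.ofReal_le_ofReal hk₂.le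
  set U : Finset Γ := (S ∪ S') ∪ S'' with hUdef
  have hUsym : SymmFin U := symmFin_union (symmFin_union hSsym hS'sym) hS''sym
  set K : ℕ := max (max k₂ 4) 1 with hKdef
  refine ⟨U ^ K, symmFin_pow hUsym K, ?_⟩
  intro B hBm hBY hB0 hB2
  have hBhalf : ν B ≤ 1/2 :=
    le_trans hB2 (ENNReal.div_le_div_right prob_le_one 2)
  have hBtop : ν B ≠ ⊤ := measure_ne_top ν B
  -- some generally useful inclusions
  have hsubY' : ∀ (V : Finset Γ) (j : ℕ), V ⊆ U → j ≤ K →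
      ∀ B₀ : Set X, B₀ ⊆ B → ν (finSMul (V^j) B₀ ∩ Y') ≤ ν (finSMul (U^K) B ∩ (Y ∪ Y')) := by
    intro V j hV hj B₀ hB₀
    apply measure_mono
    refine Set.inter_subset_inter ?_ Set.subset_union_right
    refine Set.Subset.trans (finSMul_mono_set hB₀) ?_
    exact finSMul_mono_fin (Finset.Subset.trans (pow_subset_pow_left hV j)
      (pow_subset_pow_right hUsym.1 hj)) B
  have hsubY : ∀ (V : Finset Γ) (j : ℕ), V ⊆ U → j ≤ K →
      ∀ B₀ : Set X, B₀ ⊆ B → ν (finSMul (V^j) B₀ ∩ Y) ≤ ν (finSMul (U^K) B ∩ (Y ∪ Y')) := by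
    intro V j hV hj B₀ hB₀
    apply measure_mono
    refine Set.inter_subset_inter ?_ Set.subset_union_left
    refine Set.Subset.trans (finSMul_mono_set hB₀) ?_
    exact finSMul_mono_fin (Finset.Subset.trans (pow_subset_pow_left hV j)
      (pow_subset_pow_right hUsym.1 hj)) B
  rcases le_or_gt (ENNReal.ofReal (1/8)) (ν B) with hbig | hsmall
  · -- big case : global expansion
    have ht' := HS'' B hBm hbig hBhalf
    have hsplit : ν (finSMul S'' B) ≤ ν (finSMul (U^K) B ∩ (Y ∪ Y')) + ν Y'ᶜ := by
      calc ν (finSMul S'' B)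
          ≤ ν ((finSMul S'' B ∩ (Y ∪ Y')) ∪ Y'ᶜ) := by
            apply measure_mono
            intro x hx
            by_cases hxY : x ∈ Y ∪ Y'
            · exact Or.inl ⟨hx, hxY⟩
            · exact Or.inr (fun hY' => hxY (Or.inr hY'))
      _ ≤ ν (finSMul S'' B ∩ (Y ∪ Y')) + ν Y'ᶜ := measure_union_le _ _
      _ ≤ ν (finSMul (U^K) B ∩ (Y ∪ Y')) + ν Y'ᶜ := by
            apply add_le_add_left
            apply measure_mono
            refine Set.inter_subset_inter ?_ (le_refl _)
            refine finSMul_mono_fin ?_ B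
            calc S'' ⊆ U := Finset.subset_union_right
            _ = U ^ 1 := (pow_one U).symm
            _ ⊆ U ^ K := pow_subset_pow_right hUsym.1 (le_max_right _ 1)
    -- numeric : κ * ν B + ν Y'ᶜ < (3+c)/4
    have hnum : κ * ν B + ν Y'ᶜ < ENNReal.ofReal ((3+c)/4) := by
      calc κ * ν B + ν Y'ᶜ ≤ κ * (1/2) + ENNReal.ofReal ((1-c)/16) :=
            add_le_add (mul_le_mul_right hBhalf κ) hδ'1
      _ = ENNReal.ofReal ((1+c)/2 + (1-c)/16) := by
            rw [hκr, ← ennHalfR, ← ENNReal.ofReal_mul (by linarith),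
              ← ENNReal.ofReal_add (by nlinarith) (by nlinarith)]
            congr 1
            ring
      _ < ENNReal.ofReal ((3+c)/4) := by
            exact ENNReal.ofReal_lt_ofReal_iff_of_nonneg (by nlinarith) |>.2 (by nlinarith)
    have : ENNReal.ofReal ((3+c)/4) < ν (finSMul (U^K) B ∩ (Y ∪ Y')) + ν Y'ᶜ :=
      lt_of_lt_of_le ht' hsplit
    by_contra hcon
    push_neg at hcon
    have : ENNReal.ofReal ((3+c)/4) < κ * ν B + ν Y'ᶜ :=
      lt_of_lt_of_le this (add_le_add_left hcon _)
    exact absurd (lt_trans this hnum) (lt_irrefl _)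
  · -- small case : split into B₁ B₂
    set B₁ : Set X := B ∩ Y' with hB₁def
    set B₂ : Set X := B \ Y' with hB₂def
    have hB₁m : MeasurableSet B₁ := hBm.inter hY'm
    have hB₂m : MeasurableSet B₂ := hBm.diff hY'm
    have hBsplit : ν B ≤ ν B₁ + ν B₂ := by
      rw [← Set.inter_union_diff B Y']
      exact measure_union_le _ _
    have hB₂Y : B₂ ⊆ Y := by
      intro x hx
      rcases hBY hx.1 with hY | hY'
      · exact hY
      · exact absurd hY' hx.2
    have hκB2 : κ * ν B < 2 * ν B := by
      rw [ENNReal.mul_lt_mul_iff_left hB0.ne' hBtop]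
      exact hκ2
    have hquarter : 2 * ν B < ENNReal.ofReal (1/4) := by
      calc 2 * ν B < 2 * ENNReal.ofReal (1/8) := by
            rw [ENNReal.mul_lt_mul_iff_right (by norm_num) (by norm_num)]
            exact hsmall
      _ = ENNReal.ofReal (1/4) := by
            rw [show (2:ℝ≥0∞) = ENNReal.ofReal 2 from by norm_num,
              ← ENNReal.ofReal_mul (by norm_num)]
            norm_num
    rcases le_or_gt (ν B₂) (ν B₁) with hcase | hcase
    · -- B₁ is the bigger half : iterate in Y'
      have hB₁0 : 0 < ν B₁ := by
        by_contra hz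
        push_neg at hz
        have hz' : ν B₁ = 0 := le_antisymm hz (zero_le)
        have : ν B = 0 := le_antisymm (by
          calc ν B ≤ ν B₁ + ν B₂ := hBsplit
          _ ≤ 0 + 0 := add_le_add hz (le_trans hcase hz)
          _ = 0 := by simp) (zero_le)
        exact absurd (this ▸ hB0) (lt_irrefl _)
      have hB₁Y' : B₁ ⊆ Y' := Set.inter_subset_right
      have hiter := iterE hmeas hY'm hS'sym.1 hexpY' hB₁m hB₁Y' hB₁0 4
      -- κ νB < min (κ₀^4 ν B₁) (ν Y' / 2)
      have hlt1 : κ * ν B < κ₀^4 * ν B₁ := by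
        calc κ * ν B < 2 * ν B := hκB2
        _ ≤ 2 * (ν B₁ + ν B₂) := mul_le_mul_right hBsplit 2
        _ ≤ 2 * (ν B₁ + ν B₁) := by
              exact mul_le_mul_right (add_le_add_right hcase _) 2
        _ = 4 * ν B₁ := by ring
        _ ≤ κ₀^4 * ν B₁ := mul_le_mul_left hκ₀4 _
      have hlt2 : κ * ν B < ν Y' / 2 := by
        calc κ * ν B < 2 * ν B := hκB2
        _ < ENNReal.ofReal (1/4) := hquarter
        _ ≤ ENNReal.ofReal (3/8) := ENNReal.ofReal_le_ofReal (by norm_num)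
        _ = ENNReal.ofReal (3/4) / 2 := by
              rw [show ((2:ℝ≥0∞)) = ENNReal.ofReal 2 from by norm_num,
                ← ENNReal.ofReal_div_of_pos (by norm_num : (0:ℝ) < 2)]
              norm_num
        _ ≤ ν Y' / 2 := ENNReal.div_le_div_right hY'ν 2
      calc κ * ν B < min (κ₀^4 * ν B₁) (ν Y' / 2) := lt_min hlt1 hlt2
      _ ≤ ν (finSMul (S'^4) B₁ ∩ Y') := hiter
      _ ≤ ν (finSMul (U^K) B ∩ (Y ∪ Y')) :=
            hsubY' S' 4 (Finset.Subset.trans Finset.subset_union_right Finset.subset_union_left)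
              (le_trans (le_max_right k₂ 4) (le_max_left _ 1)) B₁ Set.inter_subset_left
    · -- B₂ is the bigger half : iterate in Y
      have hB₂0 : 0 < ν B₂ := lt_of_le_of_lt (zero_le) hcase
      have hiter := iterE hmeas hYm hSsym.1 hexpY hB₂m hB₂Y hB₂0 k₂
      have hlt1 : κ * ν B < κ^k₂ * ν B₂ := by
        calc κ * ν B < 2 * ν B := hκB2
        _ ≤ 2 * (ν B₁ + ν B₂) := mul_le_mul_right hBsplit 2
        _ ≤ 2 * (ν B₂ + ν B₂) := by
              exact mul_le_mul_right (add_le_add_left hcase.le _) 2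
        _ = 4 * ν B₂ := by ring
        _ ≤ κ^k₂ * ν B₂ := mul_le_mul_left hκk₂ _
      have hlt2 : κ * ν B < ν Y / 2 := by
        calc κ * ν B < 2 * ν B := hκB2
        _ < ENNReal.ofReal (1/4) := hquarter
        _ ≤ ENNReal.ofReal (3/8) := ENNReal.ofReal_le_ofReal (by norm_num)
        _ = ENNReal.ofReal (3/4) / 2 := by
              rw [show ((2:ℝ≥0∞)) = ENNReal.ofReal 2 from by norm_num,
                ← ENNReal.ofReal_div_of_pos (by norm_num : (0:ℝ) < 2)]
              norm_num
        _ ≤ ν Y / 2 := ENNReal.div_le_div_right hY34 2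
      calc κ * ν B < min (κ^k₂ * ν B₂) (ν Y / 2) := lt_min hlt1 hlt2
      _ ≤ ν (finSMul (S^k₂) B₂ ∩ Y) := hiter
      _ ≤ ν (finSMul (U^K) B ∩ (Y ∪ Y')) :=
            hsubY S k₂ (Finset.Subset.trans Finset.subset_union_left Finset.subset_union_left)
              (le_trans (le_max_left k₂ 4) (le_max_left _ 1)) B₂ Set.diff_subset


theorem expE_mono {Y : Set X} {κ κ' : ℝ≥0∞} {S : Finset Γ} (h : κ ≤ κ')
    (hE : ExpE ν Y κ' S) : ExpE ν Y κ S := by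
  intro A hAm hAY hA0 hA2
  exact lt_of_le_of_lt (mul_le_mul_left h _) (hE A hAm hAY hA0 hA2)

theorem nu_compl_le {Y : Set X} (hYm : MeasurableSet Y) {δ : ℝ≥0∞}
    (hδ : ν Yᶜ ≤ δ) : 1 - δ ≤ ν Y := by
  have h1 : ν Yᶜᶜ = 1 - ν Yᶜ := prob_compl_eq_one_sub hYm.compl
  rw [compl_compl] at h1
  rw [h1]
  exact tsub_le_tsub_left hδ 1

theorem one_sub_ofReal (p : ℝ) (hp : 0 ≤ p) :
    (1:ℝ≥0∞) - ENNReal.ofReal p = ENNReal.ofReal (1 - p) := by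
  rw [show (1:ℝ≥0∞) = ENNReal.ofReal 1 from by norm_num, ← ENNReal.ofReal_sub _ hp]

/-- forward direction : the exhaustion -/
theorem forward (h : AsymExpDomain Γ ν Set.univ)
    (hmeas : ∀ γ : Γ, Measurable fun x : X => γ • x)
    {c : ℝ} (hc : 0 < c) (hc1 : c < 1) :
    ∃ (Yseq : ℕ → Set X) (S : ℕ → Finset Γ),
      Monotone Yseq ∧ (∀ n, MeasurableSet (Yseq n)) ∧
      ν (Set.univ \ ⋃ n, Yseq n) = 0 ∧
      ∀ n, SymmFin (S n) ∧ 0 < ν (Yseq n) ∧ ExpandsOn ν (Yseq n) c (S n) := by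
  classical
  set κ : ℝ≥0∞ := 1 + ENNReal.ofReal c with hκdef
  set c₀ : ℝ := (1+c)/2 with hc₀def
  have hc₀pos : 0 < c₀ := by rw [hc₀def]; linarith
  have hc₀lt : c₀ < 1 := by rw [hc₀def]; linarith
  have hκκ₀ : κ ≤ 1 + ENNReal.ofReal c₀ := by
    exact add_le_add_right (ENNReal.ofReal_le_ofReal (by rw [hc₀def]; linarith)) 1
  set Inv : Set X × Finset Γ → Prop := fun p =>
    MeasurableSet p.1 ∧ SymmFin p.2 ∧ ENNReal.ofReal (3/4) ≤ ν p.1 ∧ ExpE ν p.1 κ p.2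
    with hInvdef
  -- base pair
  obtain ⟨Y0, S0, hY0m, hS0, hY0c, hY0E⟩ := lemB h hmeas hc₀pos hc₀lt
    (δ := ENNReal.ofReal (1/4)) (ENNReal.ofReal_pos.2 (by norm_num))
  have hbase : Inv (Y0, S0) := by
    refine ⟨hY0m, hS0, ?_, expE_mono hκκ₀ hY0E⟩
    refine le_trans ?_ (nu_compl_le hY0m hY0c)
    rw [one_sub_ofReal _ (by norm_num)]
    exact ENNReal.ofReal_le_ofReal (by norm_num)
  -- inductive step
  have step : ∀ (p : Set X × Finset Γ) (n : ℕ), Inv p →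
      ∃ q : Set X × Finset Γ, Inv q ∧ p.1 ⊆ q.1 ∧ ν q.1ᶜ ≤ (2⁻¹:ℝ≥0∞)^n := by
    intro p n hp
    set δ : ℝ≥0∞ := min (min (ENNReal.ofReal ((1-c)/16)) (ENNReal.ofReal (1/8))) ((2⁻¹:ℝ≥0∞)^n)
      with hδdef
    have hδ0 : 0 < δ := by
      refine lt_min (lt_min ?_ ?_) ?_
      · exact ENNReal.ofReal_pos.2 (by linarith)
      · exact ENNReal.ofReal_pos.2 (by norm_num)
      · exact (pow_ne_zero n (by norm_num : (2⁻¹:ℝ≥0∞) ≠ 0)).bot_lt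
    obtain ⟨Y', S', hY'm, hS', hY'c, hY'E⟩ := lemB h hmeas hc₀pos hc₀lt hδ0
    obtain ⟨T, hTsym, hTE⟩ := unionLem h hmeas hc hc1 hp.1 hY'm hp.2.1 hS' hp.2.2.1
      hp.2.2.2 hY'E
      (le_trans hY'c (le_trans (min_le_left _ _) (min_le_left _ _)))
      (le_trans hY'c (le_trans (min_le_left _ _) (min_le_right _ _)))
    refine ⟨(p.1 ∪ Y', T), ⟨hp.1.union hY'm, hTsym, ?_, hTE⟩, Set.subset_union_left, ?_⟩
    · exact le_trans hp.2.2.1 (measure_mono Set.subset_union_left)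
    · calc ν (p.1 ∪ Y')ᶜ ≤ ν Y'ᶜ := by
            apply measure_mono
            rw [Set.compl_union]
            exact Set.inter_subset_right
      _ ≤ (2⁻¹:ℝ≥0∞)^n := le_trans hY'c (min_le_right _ _)
  choose! F hF1 hF2 hF3 using step
  set seq : ℕ → Set X × Finset Γ := fun n => Nat.rec (Y0, S0) (fun n p => F p n) n with hseqdef
  have hseqsucc : ∀ n, seq (n+1) = F (seq n) n := fun n => rfl
  have hseqInv : ∀ n, Inv (seq n) := by
    intro n
    induction n with
    | zero => exact hbase
    | succ n ih => rw [hseqsucc]; exact hF1 _ n ih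
  have hseqmono : ∀ n, (seq n).1 ⊆ (seq (n+1)).1 := by
    intro n; rw [hseqsucc]; exact hF2 _ n (hseqInv n)
  have hseqb : ∀ n, ν ((seq (n+1)).1)ᶜ ≤ (2⁻¹:ℝ≥0∞)^n := by
    intro n; rw [hseqsucc]; exact hF3 _ n (hseqInv n)
  refine ⟨fun n => (seq n).1, fun n => (seq n).2,
    monotone_nat_of_le_succ hseqmono, fun n => (hseqInv n).1, ?_, ?_⟩
  · -- conull union
    have huc : Set.univ \ (⋃ n, (seq n).1) = (⋃ n, (seq n).1)ᶜ := by ext x; simp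
    rw [huc]
    by_contra hne
    obtain ⟨n, hn⟩ := ENNReal.exists_inv_two_pow_lt (fun h0 => hne h0 : ν (⋃ n, (seq n).1)ᶜ ≠ 0)
    have hsub : (⋃ n, (seq n).1)ᶜ ⊆ ((seq (n+1)).1)ᶜ :=
      Set.compl_subset_compl.2 (le_iSup (fun n => (seq n).1) (n+1))
    exact absurd (lt_of_le_of_lt (le_trans (measure_mono hsub) (hseqb n)) hn) (lt_irrefl _)
  · intro n
    refine ⟨(hseqInv n).2.1, ?_, (hseqInv n).2.2.2⟩
    exact lt_of_lt_of_le (ENNReal.ofReal_pos.2 (by norm_num)) (hseqInv n).2.2.1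


/-- backward direction -/
theorem backward
    (hmeas : ∀ γ : Γ, Measurable fun x : X => γ • x)
    (hRHS : ∀ c : ℝ, 0 < c → c < 1 →
      ∃ (Yseq : ℕ → Set X) (S : ℕ → Finset Γ),
          Monotone Yseq ∧ (∀ n, MeasurableSet (Yseq n)) ∧
          ν (Set.univ \ ⋃ n, Yseq n) = 0 ∧
          ∀ n, SymmFin (S n) ∧ 0 < ν (Yseq n) ∧ ExpandsOn ν (Yseq n) c (S n)) :
    AsymExpDomain Γ ν Set.univ := by
  intro α hα0 hα2
  obtain ⟨Yseq, S, hmono, hms, hcon, hprop⟩ := hRHS (1/2) (by norm_num) (by norm_num)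
  set ε : ℝ := min (α/6) (1/40) with hεdef
  have hε0 : 0 < ε := lt_min (by linarith) (by norm_num)
  have hεα : ε ≤ α/6 := min_le_left _ _
  have hε40 : ε ≤ 1/40 := min_le_right _ _
  -- the union is conull
  have hU1 : ν (⋃ n, Yseq n) = 1 := by
    have hsplit : (1:ℝ≥0∞) ≤ ν (⋃ n, Yseq n) + ν (Set.univ \ ⋃ n, Yseq n) := by
      rw [← measure_univ (μ := ν)]
      refine le_trans (measure_mono ?_) (measure_union_le _ _)
      intro x _
      by_cases hx : x ∈ ⋃ n, Yseq n
      · exact Or.inl hx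
      · exact Or.inr ⟨trivial, hx⟩
    rw [hcon, add_zero] at hsplit
    exact le_antisymm prob_le_one hsplit
  -- find a level with small complement
  have htd := MeasureTheory.tendsto_measure_iUnion_atTop (μ := ν) hmono
  rw [hU1] at htd
  have hlt1 : (1:ℝ≥0∞) - ENNReal.ofReal ε < 1 :=
    ENNReal.sub_lt_self (by norm_num) (by norm_num) (ENNReal.ofReal_pos.2 hε0).ne'
  obtain ⟨n, hn⟩ := ((tendsto_order.1 htd).1 _ hlt1).exists
  have hn' : 1 - ENNReal.ofReal ε < ν (Yseq n) := hn
  set Y : Set X := Yseq n with hYdef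
  set SS : Finset Γ := S n with hSSdef
  obtain ⟨hsym, hY0, hdom⟩ := hprop n
  have hYm : MeasurableSet Y := hms n
  have hYc : ν Yᶜ < ENNReal.ofReal ε := by
    have h1 : ν Yᶜ = 1 - ν Y := prob_compl_eq_one_sub hYm
    rw [h1]
    rw [ENNReal.sub_lt_iff_lt_right (measure_ne_top ν Y) prob_le_one]
    have := ENNReal.sub_lt_iff_lt_right (b := ENNReal.ofReal ε) (c := ν Y)
      ENNReal.ofReal_ne_top
      (by rw [show (1:ℝ≥0∞) = ENNReal.ofReal 1 from by norm_num]
          exact ENNReal.ofReal_le_ofReal (by linarith)) |>.1 hn'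
    calc (1:ℝ≥0∞) < ν Y + ENNReal.ofReal ε := this
    _ = ENNReal.ofReal ε + ν Y := add_comm _ _
  refine ⟨1/4, by norm_num, SS, hsym, ?_⟩
  intro A hAm _ hαA hA2
  rw [measure_univ, mul_one] at hαA
  rw [measure_univ] at hA2
  rw [Set.inter_univ]
  -- real quantities
  set A' : Set X := A ∩ Y with hA'def
  have hA'm : MeasurableSet A' := hAm.inter hYm
  set a : ℝ := (ν A).toReal with hadef
  set a' : ℝ := (ν A').toReal with ha'def
  set e : ℝ := (ν Yᶜ).toReal with hedef
  set y : ℝ := (ν Y).toReal with hydef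
  have fe : e < ε := by
    rw [hedef, ← ENNReal.toReal_ofReal hε0.le]
    exact (ENNReal.toReal_lt_toReal (measure_ne_top ν _) ENNReal.ofReal_ne_top).2 hYc
  have fy : y = 1 - e := by
    have h1 : ν Yᶜ = 1 - ν Y := prob_compl_eq_one_sub hYm
    rw [hedef, h1, ENNReal.toReal_sub_of_le prob_le_one (by norm_num), hydef]
    norm_num
  have fαa : α ≤ a := (ENNReal.ofReal_le_iff_le_toReal (measure_ne_top ν A)).1 hαA
  have fa2 : a ≤ 1/2 := by
    have := ENNReal.toReal_mono (b := (1:ℝ≥0∞)/2) (by norm_num) hA2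
    rw [hadef]
    refine le_trans this ?_
    norm_num
  have faa' : a ≤ a' + e := by
    have hsub : A ⊆ A' ∪ Yᶜ := by
      intro x hx
      by_cases hxY : x ∈ Y
      · exact Or.inl ⟨hx, hxY⟩
      · exact Or.inr hxY
    have hh := le_trans (measure_mono hsub) (measure_union_le (μ := ν) A' Yᶜ)
    have h2 := ENNReal.toReal_mono
      (by rw [ENNReal.add_ne_top]; exact ⟨measure_ne_top ν _, measure_ne_top ν _⟩) hh
    rwa [ENNReal.toReal_add (measure_ne_top ν _) (measure_ne_top ν _)] at h2
  have fa'a : a' ≤ a := ENNReal.toReal_mono (measure_ne_top ν A) (measure_mono Set.inter_subset_left)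
  have fa'0 : 0 ≤ a' := ENNReal.toReal_nonneg
  -- reduce the goal to a real inequality
  have hgoal : ∀ z : ℝ≥0∞, z ≠ ⊤ → 5/4 * a < z.toReal →
      (1 + ENNReal.ofReal (1/4)) * ν A < z := by
    intro z hz hreal
    have h1 : (1:ℝ≥0∞) + ENNReal.ofReal (1/4) = ENNReal.ofReal (5/4) := by
      rw [show (1:ℝ≥0∞) = ENNReal.ofReal 1 from by norm_num,
        ← ENNReal.ofReal_add (by norm_num) (by norm_num)]
      norm_num
    rw [h1, ← ENNReal.ofReal_toReal (measure_ne_top ν A), ← hadef,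
      ← ENNReal.ofReal_mul (by norm_num)]
    exact (ENNReal.ofReal_lt_iff_lt_toReal (by nlinarith [ENNReal.toReal_nonneg (a := ν A)]) hz).2 hreal
  have hzfin : ν (finSMul SS A) ≠ ⊤ := measure_ne_top ν _
  set z : ℝ := (ν (finSMul SS A)).toReal with hzdef
  refine hgoal _ hzfin ?_
  rcases le_or_gt (ν A') (ν Y / 2) with hcase | hcase
  · -- A' at most half of Y
    have hA'0 : 0 < ν A' := by
      by_contra h0
      push_neg at h0
      have h0' : ν A' = 0 := le_antisymm h0 (zero_le)
      have : a' = 0 := by rw [ha'def, h0']; simp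
      have : α ≤ e := by linarith
      have : ε < ε := by
        calc ε ≤ α/6 := hεα
        _ < α := by linarith
        _ ≤ e := by linarith
        _ < ε := fe
      exact absurd this (lt_irrefl _)
    have hd := hdom A' hA'm Set.inter_subset_right hA'0 hcase
    have hd' : 3/2 * a' < (ν (finSMul SS A' ∩ Y)).toReal := by
      have h1 : (1:ℝ≥0∞) + ENNReal.ofReal (1/2) = ENNReal.ofReal (3/2) := by
        rw [show (1:ℝ≥0∞) = ENNReal.ofReal 1 from by norm_num,
          ← ENNReal.ofReal_add (by norm_num) (by norm_num)]
        norm_num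
      rw [h1] at hd
      have h2 := (ENNReal.toReal_lt_toReal (by
          exact ENNReal.mul_ne_top ENNReal.ofReal_ne_top (measure_ne_top ν _))
        (measure_ne_top ν _)).2 hd
      rwa [ENNReal.toReal_mul, ENNReal.toReal_ofReal (by norm_num)] at h2
    have hwz : (ν (finSMul SS A' ∩ Y)).toReal ≤ z := by
      refine ENNReal.toReal_mono hzfin (measure_mono ?_)
      exact Set.Subset.trans Set.inter_subset_left (finSMul_mono_set Set.inter_subset_left)
    linarith
  · -- A' more than half of Y
    have hcaseR : y/2 < a' := by
      have := (ENNReal.toReal_lt_toReal (by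
        exact ne_top_of_le_ne_top (measure_ne_top ν Y) ENNReal.half_le_self
        ) (measure_ne_top ν _)).2 hcase
      rwa [ENNReal.toReal_div, show ((2:ℝ≥0∞)).toReal = 2 from by norm_num] at this
    set B : Set X := Y \ finSMul SS A with hBdef
    have hBm : MeasurableSet B := hYm.diff (measurableSet_finSMul hmeas hAm SS)
    have hd0 : B ∩ finSMul SS A = ∅ := Set.diff_inter_self
    have hd2 : finSMul SS B ∩ A = ∅ := finSMul_inter_empty hsym.2 hd0
    have hYB : Y \ B = Y ∩ finSMul SS A := by
      ext x
      simp only [hBdef, Set.mem_diff, Set.mem_inter_iff]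
      tauto
    set b : ℝ := (ν B).toReal with hbdef
    have fb0 : 0 ≤ b := ENNReal.toReal_nonneg
    have hYBν : ν (Y \ B) = ν Y - ν B :=
      measure_diff Set.diff_subset hBm.nullMeasurableSet (measure_ne_top ν B)
    have hYBz : y - b ≤ z := by
      have h1 : ν (Y \ B) ≤ ν (finSMul SS A) := by
        rw [hYB]
        exact measure_mono Set.inter_subset_right
      have h2 := ENNReal.toReal_mono hzfin h1
      rw [hYBν, ENNReal.toReal_sub_of_le (measure_mono Set.diff_subset) (measure_ne_top ν Y)]
        at h2
      exact h2
    rcases eq_or_lt_of_le (zero_le : (0:ℝ≥0∞) ≤ ν B) with hB0 | hB0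
    · -- B is null
      have hb0 : b = 0 := by rw [hbdef, ← hB0]; simp
      linarith
    · rcases le_or_gt (ν B) (ν Y / 2) with hB2 | hB2
      · -- apply the domain property to B
        have hd := hdom B hBm Set.diff_subset hB0 hB2
        have hd' : 3/2 * b < (ν (finSMul SS B ∩ Y)).toReal := by
          have h1 : (1:ℝ≥0∞) + ENNReal.ofReal (1/2) = ENNReal.ofReal (3/2) := by
            rw [show (1:ℝ≥0∞) = ENNReal.ofReal 1 from by norm_num,
              ← ENNReal.ofReal_add (by norm_num) (by norm_num)]
            norm_num
          rw [h1] at hd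
          have h2 := (ENNReal.toReal_lt_toReal (by
              exact ENNReal.mul_ne_top ENNReal.ofReal_ne_top (measure_ne_top ν _))
            (measure_ne_top ν _)).2 hd
          rwa [ENNReal.toReal_mul, ENNReal.toReal_ofReal (by norm_num)] at h2
        have hsub : finSMul SS B ∩ Y ⊆ Y \ A' := by
          intro x hx
          refine ⟨hx.2, fun hxA' => ?_⟩
          have : x ∈ finSMul SS B ∩ A := ⟨hx.1, hxA'.1⟩
          rw [hd2] at this
          exact this
        have hYA'ν : ν (Y \ A') = ν Y - ν A' :=
          measure_diff (Set.inter_subset_right) hA'm.nullMeasurableSet (measure_ne_top ν A')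
        have h3 : (ν (finSMul SS B ∩ Y)).toReal ≤ y - a' := by
          have := ENNReal.toReal_mono (measure_ne_top ν _) (measure_mono hsub)
          rwa [hYA'ν, ENNReal.toReal_sub_of_le (measure_mono Set.inter_subset_right)
            (measure_ne_top ν Y)] at this
        linarith
      · -- impossible : B and A' both more than half of Y
        exfalso
        have hbig : y/2 < b := by
          have := (ENNReal.toReal_lt_toReal (by
            exact ne_top_of_le_ne_top (measure_ne_top ν Y) ENNReal.half_le_self
            ) (measure_ne_top ν _)).2 hB2
          rwa [ENNReal.toReal_div, show ((2:ℝ≥0∞)).toReal = 2 from by norm_num] at this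
        have hA'sub : A' ⊆ Y \ B := by
          rw [hYB]
          intro x hx
          exact ⟨hx.2, subset_finSMul hsym.1 A hx.1⟩
        have h4 : a' ≤ y - b := by
          have := ENNReal.toReal_mono (by
            rw [hYBν]; exact ne_top_of_le_ne_top (measure_ne_top ν Y) tsub_le_self)
            (measure_mono hA'sub)
          rwa [hYBν, ENNReal.toReal_sub_of_le (measure_mono Set.diff_subset)
            (measure_ne_top ν Y)] at this
        linarith

end Main
end QSTaux


/-- Corollary 4.7: a measurable action on a probability space is
asymptotically expanding in measure iff for every `c ∈ (0,1)` there is an exhaustion of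
`X` by domains of `(c,S_n)`-expansion. -/
theorem quantitative_structure_theorem
    {Γ X : Type*} [Group Γ] [Countable Γ] [MulAction Γ X] [MeasurableSpace X]
    (ν : Measure X) [IsProbabilityMeasure ν]
    (hmeas : ∀ γ : Γ, Measurable fun x : X => γ • x) :
    AsymExpDomain Γ ν Set.univ ↔
      ∀ c : ℝ, 0 < c → c < 1 →
        ∃ (Yseq : ℕ → Set X) (S : ℕ → Finset Γ),
          Monotone Yseq ∧ (∀ n, MeasurableSet (Yseq n)) ∧
          ν (Set.univ \ ⋃ n, Yseq n) = 0 ∧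
          ∀ n, SymmFin (S n) ∧ 0 < ν (Yseq n) ∧ ExpandsOn ν (Yseq n) c (S n) := by
  letI : DecidableEq Γ := Classical.decEq Γ
  constructor
  · intro hA c hc hc1
    exact QSTaux.forward hA hmeas hc hc1
  · intro hRHS
    exact QSTaux.backward hmeas hRHS
end

section
/- Let Γ be a group generated by a finite symmetric subset S with 1 ∈ S, and let ρ : Γ ↷ (X,ν) be a measure-class-preserving measurable action on a probability space. Then ρ is asymptotically expanding in measure if and only if there exist an increasing sequence (Y_n)_{n∈ℕ} of measurable subsets of X with ν(X ∖ ⋃_n Y_n) = 0 and constants c_n > 0 such that each Y_n is a domain of (c_n, S)-expansion. -/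
open MeasureTheory Set Filter Pointwise

open scoped ENNReal NNReal

section Basics
variable {Γ X : Type*} [Group Γ] [MulAction Γ X]

lemma mem_finSMul {S : Finset Γ} {A : Set X} {x : X} :
    x ∈ finSMul S A ↔ ∃ s ∈ S, ∃ a ∈ A, s • a = x := by
  simp [finSMul, Set.mem_smul_set]

lemma smul_set_eq_preimage (γ : Γ) (A : Set X) :
    γ • A = (fun x => γ⁻¹ • x) ⁻¹' A := by
  ext x; simp [Set.mem_smul_set_iff_inv_smul_mem]

lemma finSMul_mono_set {S : Finset Γ} {A B : Set X} (h : A ⊆ B) :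
    finSMul S A ⊆ finSMul S B := by
  intro x hx
  rcases mem_finSMul.1 hx with ⟨s, hs, a, ha, rfl⟩
  exact mem_finSMul.2 ⟨s, hs, a, h ha, rfl⟩

lemma finSMul_mono_finset {S T : Finset Γ} (h : S ⊆ T) (A : Set X) :
    finSMul S A ⊆ finSMul T A := by
  intro x hx
  rcases mem_finSMul.1 hx with ⟨s, hs, a, ha, rfl⟩
  exact mem_finSMul.2 ⟨s, h hs, a, ha, rfl⟩

lemma subset_finSMul {S : Finset Γ} (h1 : (1:Γ) ∈ S) (A : Set X) :
    A ⊆ finSMul S A := fun x hx => mem_finSMul.2 ⟨1, h1, x, hx, one_smul _ _⟩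

lemma finSMul_mul [DecidableEq Γ] (S T : Finset Γ) (A : Set X) :
    finSMul (S * T) A = finSMul S (finSMul T A) := by
  ext x
  constructor
  · intro hx
    rcases mem_finSMul.1 hx with ⟨u, hu, a, ha, rfl⟩
    rcases Finset.mem_mul.1 hu with ⟨s, hs, t, ht, rfl⟩
    exact mem_finSMul.2 ⟨s, hs, t • a, mem_finSMul.2 ⟨t, ht, a, ha, rfl⟩, (mul_smul s t a).symm⟩
  · intro hx
    rcases mem_finSMul.1 hx with ⟨s, hs, b, hb, rfl⟩
    rcases mem_finSMul.1 hb with ⟨t, ht, a, ha, rfl⟩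
    exact mem_finSMul.2 ⟨s * t, Finset.mul_mem_mul hs ht, a, ha, mul_smul s t a⟩

lemma finSMul_iUnion {S : Finset Γ} {ι : Sort*} (A : ι → Set X) :
    finSMul S (⋃ i, A i) = ⋃ i, finSMul S (A i) := by
  ext x
  simp only [mem_finSMul, Set.mem_iUnion]
  constructor
  · rintro ⟨s, hs, a, ⟨i, ha⟩, rfl⟩; exact ⟨i, s, hs, a, ha, rfl⟩
  · rintro ⟨i, s, hs, a, ha, rfl⟩; exact ⟨s, hs, a, ⟨i, ha⟩, rfl⟩

/-- the symmetric "Z-trick": every point of `I ⊆ S·C` is in `S·(C ∩ S·I)`. -/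
lemma symm_trick {S : Finset Γ} (hS : ∀ s ∈ S, s⁻¹ ∈ S) {C I : Set X}
    (h : I ⊆ finSMul S C) : I ⊆ finSMul S (C ∩ finSMul S I) := by
  intro y hy
  rcases mem_finSMul.1 (h hy) with ⟨s, hs, z, hz, rfl⟩
  refine mem_finSMul.2 ⟨s, hs, z, ⟨hz, ?_⟩, rfl⟩
  exact mem_finSMul.2 ⟨s⁻¹, hS s hs, s • z, hy, by simp⟩

variable [MeasurableSpace X]

lemma measurableSet_smul (hmeas : ∀ γ : Γ, Measurable fun x : X => γ • x)
    (γ : Γ) {A : Set X} (hA : MeasurableSet A) : MeasurableSet (γ • A) := by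
  rw [smul_set_eq_preimage]
  exact hA.preimage (hmeas γ⁻¹)

lemma measurableSet_finSMul (hmeas : ∀ γ : Γ, Measurable fun x : X => γ • x)
    (S : Finset Γ) {A : Set X} (hA : MeasurableSet A) : MeasurableSet (finSMul S A) :=
  S.measurableSet_biUnion fun s _ => measurableSet_smul hmeas s hA

end Basics

section Gen
variable {Γ : Type*} [Group Γ] [DecidableEq Γ]

lemma pow_subset_pow_succ {S : Finset Γ} (h1 : (1:Γ) ∈ S) (k : ℕ) :
    (S ^ k : Finset Γ) ⊆ S ^ (k+1) := by
  intro x hx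
  rw [pow_succ]
  simpa using Finset.mul_mem_mul hx h1

lemma pow_subset_pow {S : Finset Γ} (h1 : (1:Γ) ∈ S) {k l : ℕ} (h : k ≤ l) :
    (S ^ k : Finset Γ) ⊆ S ^ l := by
  induction l with
  | zero => simp [Nat.le_zero.1 h]
  | succ n ih =>
    rcases Nat.lt_or_ge k (n+1) with hk | hk
    · exact (ih (Nat.lt_succ_iff.1 hk)).trans (pow_subset_pow_succ h1 n)
    · have : k = n+1 := le_antisymm h hk
      simp [this]

lemma inv_mem_pow {S : Finset Γ} (hS : ∀ s ∈ S, s⁻¹ ∈ S) {k : ℕ} {γ : Γ}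
    (h : γ ∈ S ^ k) : γ⁻¹ ∈ S ^ k := by
  induction k generalizing γ with
  | zero => simp_all [Finset.mem_one]
  | succ n ih =>
    rw [pow_succ] at h
    rcases Finset.mem_mul.1 h with ⟨a, ha, b, hb, rfl⟩
    rw [pow_succ', mul_inv_rev]
    exact Finset.mul_mem_mul (hS b hb) (ih ha)

lemma exists_mem_pow {S : Finset Γ} (hS : SymmFin S)
    (hgen : Subgroup.closure (S : Set Γ) = ⊤) (γ : Γ) : ∃ k, γ ∈ S ^ k := by
  have hγ : γ ∈ Subgroup.closure (S : Set Γ) := by rw [hgen]; trivial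
  induction hγ using Subgroup.closure_induction with
  | mem s hs => exact ⟨1, by simpa using hs⟩
  | one => exact ⟨0, by simp [Finset.mem_one]⟩
  | mul a b _ _ iha ihb =>
    rcases iha with ⟨k, hk⟩; rcases ihb with ⟨l, hl⟩
    exact ⟨k + l, by rw [pow_add]; exact Finset.mul_mem_mul hk hl⟩
  | inv a _ iha =>
    rcases iha with ⟨k, hk⟩
    exact ⟨k, inv_mem_pow hS.2 hk⟩

lemma exists_pow_superset {S : Finset Γ} (hS : SymmFin S)
    (hgen : Subgroup.closure (S : Set Γ) = ⊤) (T : Finset Γ) :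
    ∃ k, 1 ≤ k ∧ T ⊆ S ^ k := by
  choose f hf using fun t : Γ => exists_mem_pow hS hgen t
  refine ⟨max 1 (T.sup f), le_max_left _ _, fun t ht => ?_⟩
  exact pow_subset_pow hS.1 (le_trans (Finset.le_sup ht) (le_max_right _ _)) (hf t)
end Gen
section Modulus
variable {Γ X : Type*} [Group Γ] [MulAction Γ X] [MeasurableSpace X]
  (ν : Measure X) [IsProbabilityMeasure ν]







lemma modulus_one (hmeas : ∀ γ : Γ, Measurable fun x : X => γ • x)
    (hmcp : MeasClassPres Γ ν) (γ : Γ) {ε : ℝ} (hε : 0 < ε) :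
    ∃ δ : ℝ, 0 < δ ∧ ∀ Z : Set X, MeasurableSet Z → ν Z ≤ ENNReal.ofReal δ →
      ν (γ • Z) ≤ ENNReal.ofReal ε := by
  by_contra hcon
  push_neg at hcon
  have key : ∀ k : ℕ, ∃ Z : Set X, MeasurableSet Z ∧ ν Z ≤ ENNReal.ofReal ((1/2)^k) ∧
      ENNReal.ofReal ε < ν (γ • Z) := by
    intro k
    rcases hcon ((1/2)^k) (by positivity) with ⟨Z, hZm, hZ, hgt⟩
    exact ⟨Z, hZm, hZ, hgt⟩
  choose Z hZm hZle hZgt using key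
  have hsum : (∑' k, ν (Z k)) ≠ ∞ := by
    have : (∑' k, ν (Z k)) ≤ ∑' k : ℕ, (2⁻¹ : ℝ≥0∞) ^ k := by
      apply ENNReal.tsum_le_tsum
      intro k
      refine (hZle k).trans (le_of_eq ?_)
      rw [ENNReal.ofReal_pow (by norm_num)]
      congr 1
      rw [one_div, ENNReal.ofReal_inv_of_pos (by norm_num)]
      norm_num
    refine ne_top_of_le_ne_top ?_ this
    rw [ENNReal.tsum_geometric]
    simp
  have hlim : ν (Filter.limsup Z Filter.atTop) = 0 := measure_limsup_atTop_eq_zero hsum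
  have hLm : MeasurableSet (Filter.limsup Z Filter.atTop) := by
    rw [Filter.limsup_eq_iInf_iSup_of_nat]
    exact MeasurableSet.iInter fun n => MeasurableSet.iUnion fun k =>
      MeasurableSet.iUnion fun _ => hZm k
  have hsmul0 : ν (γ • Filter.limsup Z Filter.atTop) = 0 := (hmcp γ _ hLm).2 hlim
  -- but the smul of the limsup has measure ≥ ε
  have heq : γ • Filter.limsup Z Filter.atTop = ⋂ n, ⋃ k, ⋃ (_ : n ≤ k), γ • Z k := by
    rw [Filter.limsup_eq_iInf_iSup_of_nat]
    ext x
    simp only [Set.mem_smul_set_iff_inv_smul_mem, Set.iInf_eq_iInter, Set.iSup_eq_iUnion,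
      Set.mem_iInter, Set.mem_iUnion]
  have hanti : Antitone (fun n => ⋃ k, ⋃ (_ : n ≤ k), γ • Z k) := by
    intro m n hmn
    exact Set.iUnion₂_mono' fun k hk => ⟨k, hmn.trans hk, le_rfl⟩
  have htend := tendsto_measure_iInter_atTop
    (fun n => ((MeasurableSet.iUnion fun k => MeasurableSet.iUnion fun _ =>
      measurableSet_smul hmeas γ (hZm k)).nullMeasurableSet)) hanti
    ⟨0, measure_ne_top ν _⟩
  have hge : ENNReal.ofReal ε ≤ ν (⋂ n, ⋃ k, ⋃ (_ : n ≤ k), γ • Z k) := by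
    refine ge_of_tendsto' htend fun n => ?_
    exact le_trans (hZgt n).le (measure_mono (Set.subset_iUnion₂ (s := fun k (_ : n ≤ k) => γ • Z k) n le_rfl))
  rw [← heq, hsmul0] at hge
  simp only [nonpos_iff_eq_zero, ENNReal.ofReal_eq_zero] at hge
  exact absurd hge (by linarith)

lemma modulus (hmeas : ∀ γ : Γ, Measurable fun x : X => γ • x)
    (hmcp : MeasClassPres Γ ν) (S : Finset Γ) {ε : ℝ} (hε : 0 < ε) :
    ∃ δ : ℝ, 0 < δ ∧ ∀ Z : Set X, MeasurableSet Z → ν Z ≤ ENNReal.ofReal δ →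
      ν (finSMul S Z) ≤ ENNReal.ofReal ε := by
  have hε' : 0 < ε / (S.card + 1) := by positivity
  choose δ hδpos hδ using fun s : Γ => modulus_one ν hmeas hmcp s hε'
  rcases S.eq_empty_or_nonempty with rfl | hSne
  · exact ⟨1, one_pos, fun Z _ _ => by simp [finSMul]⟩
  refine ⟨(S.image δ).min' (hSne.image δ), ?_, fun Z hZm hZle => ?_⟩
  · obtain ⟨s, hs, hmin⟩ := Finset.mem_image.1 ((S.image δ).min'_mem (hSne.image δ))
    rw [← hmin]; exact hδpos s
  · have hbound : ∀ s ∈ S, ν (s • Z) ≤ ENNReal.ofReal (ε / (S.card + 1)) := by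
      intro s hs
      refine hδ s Z hZm (hZle.trans ?_)
      exact ENNReal.ofReal_le_ofReal (Finset.min'_le _ _ (Finset.mem_image_of_mem δ hs))
    calc ν (finSMul S Z) ≤ ∑ s ∈ S, ν (s • Z) := measure_biUnion_finset_le S _
      _ ≤ ∑ _s ∈ S, ENNReal.ofReal (ε / (S.card + 1)) := Finset.sum_le_sum hbound
      _ = S.card * ENNReal.ofReal (ε / (S.card + 1)) := by rw [Finset.sum_const, nsmul_eq_mul]
      _ ≤ ENNReal.ofReal ε := by
          rw [← ENNReal.ofReal_natCast (S.card), ← ENNReal.ofReal_mul (by positivity)]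
          apply ENNReal.ofReal_le_ofReal
          have h1 : (0:ℝ) < (S.card:ℝ)+1 := by positivity
          rw [mul_comm, div_mul_eq_mul_div, div_le_iff₀ h1]
          nlinarith [hε.le, Nat.cast_nonneg (α:=ℝ) S.card]
end Modulus
section Extra
variable {Γ X : Type*} [Group Γ] [MulAction Γ X]

lemma finSMul_one [DecidableEq Γ] (A : Set X) : finSMul (1 : Finset Γ) A = A := by
  ext x
  simp only [mem_finSMul, Finset.mem_one]
  constructor
  · rintro ⟨s, rfl, a, ha, rfl⟩; simpa
  · intro hx; exact ⟨1, rfl, x, hx, one_smul _ _⟩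

lemma finSMul_pow_eq_iterate [DecidableEq Γ] (S : Finset Γ) (A : Set X) (k : ℕ) :
    finSMul (S ^ k) A = (finSMul S)^[k] A := by
  induction k with
  | zero => simpa using finSMul_one A
  | succ n ih =>
    rw [pow_succ', finSMul_mul, ih, Function.iterate_succ_apply']
end Extra

section Thin
variable {Γ X : Type*} [Group Γ] [MulAction Γ X] [MeasurableSpace X]
  (ν : Measure X) [IsProbabilityMeasure ν]

lemma thin_bound [DecidableEq Γ] (hmeas : ∀ γ : Γ, Measurable fun x : X => γ • x)
    (hmcp : MeasClassPres Γ ν) {S : Finset Γ} (hS : SymmFin S)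
    (hgen : Subgroup.closure (S : Set Γ) = ⊤)
    (hAE : AsymExpDomain Γ ν Set.univ)
    {α : ℝ} (hα0 : 0 < α) (hα : α ≤ 1/2) :
    ∃ c' : ℝ, 0 < c' ∧ ∀ U : Set X, MeasurableSet U → ν U ≤ 1/2 →
      ν (finSMul S U \ U) ≤ ENNReal.ofReal c' * ν U → ν U < ENNReal.ofReal α := by
  obtain ⟨c, hc, T, hT, hexp⟩ := hAE α hα0 hα
  obtain ⟨k, hk1, hTk⟩ := exists_pow_superset hS hgen T
  set ε : ℝ := c * α / (2 * k) with hεdef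
  have hε : 0 < ε := by positivity
  choose d hd1 hd2 using fun e : {e : ℝ // 0 < e} =>
    modulus ν hmeas hmcp S e.2
  set v : ℕ → {e : ℝ // 0 < e} :=
    fun n => Nat.rec ⟨ε, hε⟩ (fun _ p => ⟨min ε (d p), lt_min hε (hd1 p)⟩) n with hv
  have hvε : ∀ n, (v n).1 ≤ ε := by
    intro n; cases n with
    | zero => exact le_rfl
    | succ m => exact min_le_left _ _
  have hvstep : ∀ n (W : Set X), MeasurableSet W → ν W ≤ ENNReal.ofReal (v (n+1)).1 →
      ν (finSMul S W) ≤ ENNReal.ofReal (v n).1 := by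
    intro n W hWm hWle
    exact hd2 (v n) W hWm (hWle.trans (ENNReal.ofReal_le_ofReal (min_le_right _ _)))
  refine ⟨(v (k-1)).1, (v (k-1)).2, fun U hUm hU12 hthin => ?_⟩
  by_contra hcon
  push_neg at hcon
  -- iterated neighborhoods
  set V : ℕ → Set X := fun j => (finSMul S)^[j] U with hV
  have hV0 : V 0 = U := rfl
  have hVsucc : ∀ j, V (j+1) = finSMul S (V j) := fun j => Function.iterate_succ_apply' _ _ _
  have hVm : ∀ j, MeasurableSet (V j) := by
    intro j; induction j with
    | zero => exact hUm
    | succ n ih => rw [hVsucc]; exact measurableSet_finSMul hmeas S ih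
  have hVmono : ∀ j, V j ⊆ V (j+1) := by
    intro j; rw [hVsucc]; exact subset_finSMul hS.1 _
  set inc : ℕ → Set X := fun j => V (j+1) \ V j with hincdef
  have hincm : ∀ j, MeasurableSet (inc j) := fun j => (hVm (j+1)).diff (hVm j)
  have hincsub : ∀ j, inc (j+1) ⊆ finSMul S (inc j) := by
    intro j y hy
    obtain ⟨hy1, hy2⟩ := hy
    rw [hVsucc (j+1)] at hy1
    rcases mem_finSMul.1 hy1 with ⟨s, hs, z, hz, rfl⟩
    have hznot : z ∉ V j := by
      intro hzj
      exact hy2 (by rw [hVsucc j]; exact mem_finSMul.2 ⟨s, hs, z, hzj, rfl⟩)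
    exact mem_finSMul.2 ⟨s, hs, z, ⟨hz, hznot⟩, rfl⟩
  -- increments are uniformly small
  have hbnd : ∀ j, j < k → ν (inc j) ≤ ENNReal.ofReal (v (k-1-j)).1 := by
    intro j
    induction j with
    | zero =>
      intro _
      have : ν (inc 0) ≤ ENNReal.ofReal (v (k-1)).1 * ν U := by
        simpa [hincdef, hV0, hVsucc 0] using hthin
      refine this.trans ?_
      calc ENNReal.ofReal (v (k-1)).1 * ν U ≤ ENNReal.ofReal (v (k-1)).1 * 1 := by
            exact mul_le_mul_right (prob_le_one) _
        _ = ENNReal.ofReal (v (k-1)).1 := mul_one _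
    | succ n ih =>
      intro hnk
      have hn : n < k := Nat.lt_of_succ_lt hnk
      have heq : k - 1 - n = (k - 1 - (n+1)) + 1 := by omega
      have h1 : ν (inc n) ≤ ENNReal.ofReal (v ((k-1-(n+1)) + 1)).1 := by
        rw [← heq]; exact ih hn
      calc ν (inc (n+1)) ≤ ν (finSMul S (inc n)) := measure_mono (hincsub n)
        _ ≤ ENNReal.ofReal (v (k-1-(n+1))).1 := hvstep _ _ (hincm n) h1
  have hbndε : ∀ j, j < k → ν (inc j) ≤ ENNReal.ofReal ε := by
    intro j hj
    exact (hbnd j hj).trans (ENNReal.ofReal_le_ofReal (hvε _))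
  -- cover V k by U and the increments
  have hcover : ∀ j, V j ⊆ U ∪ ⋃ i ∈ Finset.range j, inc i := by
    intro j; induction j with
    | zero => simp [hV0]
    | succ n ih =>
      intro x hx
      by_cases hxn : x ∈ V n
      · rcases ih hxn with h | h
        · exact Or.inl h
        · refine Or.inr ?_
          simp only [Set.mem_iUnion] at h ⊢
          rcases h with ⟨i, hi, hxi⟩
          exact ⟨i, by simp at hi ⊢; omega, hxi⟩
      · refine Or.inr ?_
        simp only [Set.mem_iUnion]
        exact ⟨n, by simp, ⟨hx, hxn⟩⟩
  have hVk : ν (V k) ≤ ν U + ENNReal.ofReal (c * α / 2) := by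
    calc ν (V k) ≤ ν (U ∪ ⋃ i ∈ Finset.range k, inc i) := measure_mono (hcover k)
      _ ≤ ν U + ν (⋃ i ∈ Finset.range k, inc i) := measure_union_le _ _
      _ ≤ ν U + ∑ i ∈ Finset.range k, ν (inc i) := by
          exact add_le_add_right (measure_biUnion_finset_le _ _) _
      _ ≤ ν U + ∑ _i ∈ Finset.range k, ENNReal.ofReal ε := by
          refine add_le_add_right (Finset.sum_le_sum fun i hi => ?_) _
          exact hbndε i (Finset.mem_range.1 hi)
      _ = ν U + k * ENNReal.ofReal ε := by rw [Finset.sum_const, Finset.card_range, nsmul_eq_mul]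
      _ = ν U + ENNReal.ofReal (c * α / 2) := by
          rw [← ENNReal.ofReal_natCast k, ← ENNReal.ofReal_mul (Nat.cast_nonneg k)]
          congr 1
          apply congrArg
          rw [hεdef]
          have hk0 : (k:ℝ) ≠ 0 := Nat.cast_ne_zero.2 (by omega)
          field_simp
  -- expansion hypothesis beats the cover bound
  have hUexp : (1 + ENNReal.ofReal c) * ν U < ν (V k) := by
    have h1 := hexp U hUm (Set.subset_univ U) (by simpa using hcon) (by simpa using hU12)
    calc (1 + ENNReal.ofReal c) * ν U < ν (finSMul T U ∩ Set.univ) := h1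
      _ ≤ ν (finSMul (S ^ k) U) := by
          rw [Set.inter_univ]
          exact measure_mono (finSMul_mono_finset hTk U)
      _ = ν (V k) := by rw [finSMul_pow_eq_iterate]
  have hlow : ν U + ENNReal.ofReal (c * α) ≤ (1 + ENNReal.ofReal c) * ν U := by
    rw [add_mul, one_mul]
    refine add_le_add_right ?_ _
    rw [ENNReal.ofReal_mul hc.le]
    exact mul_le_mul_right hcon _
  have : ν U + ENNReal.ofReal (c * α) < ν U + ENNReal.ofReal (c * α / 2) :=
    lt_of_le_of_lt hlow (lt_of_lt_of_le hUexp hVk)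
  have hfin : ν U ≠ ∞ := measure_ne_top ν U
  have h2 := (ENNReal.add_lt_add_iff_left hfin).1 this
  rw [ENNReal.ofReal_lt_ofReal_iff (by positivity)] at h2
  nlinarith
end Thin
section Thin34
variable {Γ X : Type*} [Group Γ] [MulAction Γ X] [MeasurableSpace X]
  (ν : Measure X) [IsProbabilityMeasure ν]

lemma thin_bound34 [DecidableEq Γ] (hmeas : ∀ γ : Γ, Measurable fun x : X => γ • x)
    (hmcp : MeasClassPres Γ ν) {S : Finset Γ} (hS : SymmFin S)
    (hgen : Subgroup.closure (S : Set Γ) = ⊤)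
    (hAE : AsymExpDomain Γ ν Set.univ)
    {α : ℝ} (hα0 : 0 < α) (hα : α ≤ 1/2) :
    ∃ c'' : ℝ, 0 < c'' ∧ ∀ U : Set X, MeasurableSet U → ν U ≤ ENNReal.ofReal (3/4) →
      ν (finSMul S U \ U) ≤ ENNReal.ofReal c'' * ν U → ν U < ENNReal.ofReal α := by
  obtain ⟨ca, hca, hcaP⟩ := thin_bound ν hmeas hmcp hS hgen hAE hα0 hα
  obtain ⟨c5, hc5, hc5P⟩ := thin_bound ν hmeas hmcp hS hgen hAE
    (by norm_num : (0:ℝ) < 1/5) (by norm_num)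
  refine ⟨min ca (min (c5/5) (1/20)), by positivity, fun U hUm hU34 hthin => ?_⟩
  set c'' : ℝ := min ca (min (c5/5) (1/20)) with hc''
  have hc''ca : c'' ≤ ca := min_le_left _ _
  have hc''5 : c'' ≤ c5/5 := le_trans (min_le_right _ _) (min_le_left _ _)
  have hc''20 : c'' ≤ 1/20 := le_trans (min_le_right _ _) (min_le_right _ _)
  have hc''0 : 0 < c'' := by positivity
  by_cases hU12 : ν U ≤ 1/2
  · exact hcaP U hUm hU12 (hthin.trans (mul_le_mul_left
      (ENNReal.ofReal_le_ofReal hc''ca) _))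
  -- ν U > 1/2 : derive a contradiction
  exfalso
  push_neg at hU12
  have hSUm : MeasurableSet (finSMul S U) := measurableSet_finSMul hmeas S hUm
  have hSUle : ν (finSMul S U) ≤ ENNReal.ofReal (4/5) := by
    have h1 : ν (finSMul S U) ≤ ν U + ν (finSMul S U \ U) := by
      calc ν (finSMul S U) = ν (U ∪ (finSMul S U \ U)) := by
            rw [Set.union_diff_self, Set.union_eq_self_of_subset_left (subset_finSMul hS.1 U)]
        _ ≤ ν U + ν (finSMul S U \ U) := measure_union_le _ _
    have h2 : ν (finSMul S U \ U) ≤ ENNReal.ofReal (1/20) := by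
      refine hthin.trans ?_
      calc ENNReal.ofReal c'' * ν U ≤ ENNReal.ofReal (1/20) * 1 := by
            exact mul_le_mul' (ENNReal.ofReal_le_ofReal hc''20) prob_le_one
        _ = ENNReal.ofReal (1/20) := mul_one _
    calc ν (finSMul S U) ≤ ENNReal.ofReal (3/4) + ENNReal.ofReal (1/20) :=
          h1.trans (add_le_add hU34 h2)
      _ = ENNReal.ofReal (3/4 + 1/20) := (ENNReal.ofReal_add (by norm_num) (by norm_num)).symm
      _ ≤ ENNReal.ofReal (4/5) := ENNReal.ofReal_le_ofReal (by norm_num)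
  set V : Set X := (finSMul S U)ᶜ with hVdef
  have hVm : MeasurableSet V := hSUm.compl
  have hVsum : ν (finSMul S U) + ν V = 1 := by
    rw [hVdef, measure_add_measure_compl hSUm, measure_univ]
  have hVge : ENNReal.ofReal (1/5) ≤ ν V := by
    have h1 : (1 : ℝ≥0∞) = ENNReal.ofReal (4/5) + ENNReal.ofReal (1/5) := by
      rw [← ENNReal.ofReal_add (by norm_num) (by norm_num)]
      norm_num
    have h2 : ENNReal.ofReal (4/5) + ENNReal.ofReal (1/5) ≤ ENNReal.ofReal (4/5) + ν V := by
      rw [← h1, ← hVsum]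
      exact add_le_add_left hSUle _
    exact (ENNReal.add_le_add_iff_left ENNReal.ofReal_ne_top).1 h2
  have hVle : ν V ≤ 1/2 := by
    by_contra hV2
    push_neg at hV2
    have : (1:ℝ≥0∞) < ν (finSMul S U) + ν V := by
      calc (1:ℝ≥0∞) = 1/2 + 1/2 := by rw [ENNReal.add_halves]
        _ < ν (finSMul S U) + ν V := by
            exact ENNReal.add_lt_add (lt_of_lt_of_le hU12 (measure_mono (subset_finSMul hS.1 U))) hV2
    rw [hVsum] at this
    exact lt_irrefl _ this
  have hVbdry : finSMul S V \ V ⊆ finSMul S U \ U := by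
    rintro y ⟨hy1, hy2⟩
    have hySU : y ∈ finSMul S U := by simpa [hVdef] using hy2
    refine ⟨hySU, fun hyU => ?_⟩
    rcases mem_finSMul.1 hy1 with ⟨s, hs, v, hv, rfl⟩
    have : v ∈ finSMul S U := mem_finSMul.2 ⟨s⁻¹, hS.2 s hs, s • v, hyU, by simp⟩
    exact hv this
  have hVthin : ν (finSMul S V \ V) ≤ ENNReal.ofReal c5 * ν V := by
    calc ν (finSMul S V \ V) ≤ ν (finSMul S U \ U) := measure_mono hVbdry
      _ ≤ ENNReal.ofReal c'' * ν U := hthin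
      _ ≤ ENNReal.ofReal (c5/5) * 1 := mul_le_mul' (ENNReal.ofReal_le_ofReal hc''5) prob_le_one
      _ = ENNReal.ofReal c5 * ENNReal.ofReal (1/5) := by
          rw [mul_one, ← ENNReal.ofReal_mul hc5.le]
          congr 1
          ring
      _ ≤ ENNReal.ofReal c5 * ν V := mul_le_mul_right hVge _
  exact absurd (hc5P V hVm hVle hVthin) (not_lt.2 hVge)
end Thin34


section Greedy
variable {Γ X : Type*} [Group Γ] [MulAction Γ X] [MeasurableSpace X]
  (ν : Measure X) [IsProbabilityMeasure ν]

lemma finSMul_biUnion {S : Finset Γ} {ι : Type*} (t : Set ι) (A : ι → Set X) :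
    finSMul S (⋃ i ∈ t, A i) = ⋃ i ∈ t, finSMul S (A i) := by
  simp only [finSMul_iUnion]

lemma finSMul_empty (S : Finset Γ) : finSMul S (∅ : Set X) = ∅ := by
  simp [finSMul]

lemma greedy [DecidableEq Γ] (hmeas : ∀ γ : Γ, Measurable fun x : X => γ • x)
    (hmcp : MeasClassPres Γ ν) {S : Finset Γ} (hS : SymmFin S)
    (hgen : Subgroup.closure (S : Set Γ) = ⊤)
    (hAE : AsymExpDomain Γ ν Set.univ)
    {α : ℝ} (hα0 : 0 < α) (hα : α ≤ 1/8) :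
    ∃ D : Set X, MeasurableSet D ∧ ν (Set.univ \ D) ≤ ENNReal.ofReal α ∧
      ENNReal.ofReal (1 - α) ≤ ν D ∧ ∃ c : ℝ, 0 < c ∧ ExpandsOn ν D c S := by
  obtain ⟨c'', hc''0, hc''P⟩ := thin_bound34 ν hmeas hmcp hS hgen hAE hα0 (by linarith)
  -- "bad" subsets of `Y`
  set Bad : Set X → Set X → Prop := fun Y A =>
    MeasurableSet A ∧ A ⊆ Y ∧ 0 < ν A ∧ ν A ≤ ν Y / 2 ∧
      ν (finSMul S A ∩ Y) ≤ (1 + ENNReal.ofReal c'') * ν A with hBad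
  -- a near-maximal bad set picker
  have hpick : ∀ Y : Set X, ∃ P : Set X, MeasurableSet P ∧ P ⊆ Y ∧
      (∀ A, Bad Y A → ν A ≤ 2 * ν P) ∧ (Bad Y P ∨ P = ∅) := by
    intro Y
    by_cases h : ∃ A, Bad Y A
    · set β := ⨆ A, ⨆ (_ : Bad Y A), ν A with hβ
      obtain ⟨A0, hA0⟩ := h
      have hβ0 : β ≠ 0 := by
        refine fun h0 => hA0.2.2.1.ne' ?_
        have : ν A0 ≤ β := le_iSup₂ (f := fun A (_ : Bad Y A) => ν A) A0 hA0
        simpa [h0] using this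
      have hβtop : β ≠ ∞ := by
        refine ne_top_of_le_ne_top (b := 1) ENNReal.one_ne_top ?_
        exact iSup₂_le fun A _ => prob_le_one
      have hhalf : β / 2 < β := ENNReal.half_lt_self hβ0 hβtop
      rw [hβ] at hhalf
      rw [lt_iSup_iff] at hhalf
      obtain ⟨P, hP⟩ := hhalf
      rw [lt_iSup_iff] at hP
      obtain ⟨hPbad, hPgt⟩ := hP
      refine ⟨P, hPbad.1, hPbad.2.1, fun A hA => ?_, Or.inl hPbad⟩
      calc ν A ≤ β := le_iSup₂ (f := fun A (_ : Bad Y A) => ν A) A hA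
        _ = β / 2 * 2 := (ENNReal.div_mul_cancel (by norm_num) (by norm_num)).symm
        _ ≤ ν P * 2 := mul_le_mul_left hPgt.le _
        _ = 2 * ν P := mul_comm _ _
    · push_neg at h
      exact ⟨∅, MeasurableSet.empty, Set.empty_subset Y,
        fun A hA => absurd hA (h A), Or.inr rfl⟩
  choose pick hpm hpsub hpmax hpbad using hpick
  -- the greedy sequence
  set Y : ℕ → Set X := fun n => Nat.rec Set.univ (fun _ Yn => Yn \ pick Yn) n with hY
  set A : ℕ → Set X := fun n => pick (Y n) with hA
  have hYsucc : ∀ n, Y (n+1) = Y n \ A n := fun n => rfl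
  have hYm : ∀ n, MeasurableSet (Y n) := by
    intro n; induction n with
    | zero => exact MeasurableSet.univ
    | succ m ih => rw [hYsucc]; exact ih.diff (hpm (Y m))
  have hAm : ∀ n, MeasurableSet (A n) := fun n => hpm (Y n)
  have hAsub : ∀ n, A n ⊆ Y n := fun n => hpsub (Y n)
  set Un : ℕ → Set X := fun n => ⋃ i ∈ Finset.range n, A i with hUn
  have hUnm : ∀ n, MeasurableSet (Un n) := fun n =>
    (Finset.range n).measurableSet_biUnion fun i _ => hAm i
  have hUnsucc : ∀ n, Un (n+1) = Un n ∪ A n := by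
    intro n
    simp only [hUn, Finset.range_add_one, Finset.set_biUnion_insert]
    exact Set.union_comm _ _
  have hYeq : ∀ n, Y n = Set.univ \ Un n := by
    intro n; induction n with
    | zero =>
      show Set.univ = _
      simp [hUn]
    | succ m ih =>
      rw [hYsucc, ih, hUnsucc, Set.diff_diff]
  have hUnmono : Monotone Un := by
    intro m n hmn
    exact Set.biUnion_subset_biUnion_left (by exact Finset.range_subset_range.2 hmn)
  have hdisj : ∀ i j, i < j → Disjoint (A i) (A j) := by
    intro i j hij
    refine Set.disjoint_left.2 fun x hxi hxj => ?_
    have hx : x ∈ Un j := Set.mem_biUnion (Finset.mem_range.2 hij) hxi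
    have := hAsub j hxj
    rw [hYeq j] at this
    exact this.2 hx
  set U : Set X := ⋃ i, A i with hU
  have hUm : MeasurableSet U := MeasurableSet.iUnion hAm
  have hUnU : ∀ n, Un n ⊆ U := fun n => Set.iUnion₂_subset fun i _ => Set.subset_iUnion A i
  -- per-index boundary bound
  have hper : ∀ i, ν ((finSMul S (A i) ∩ Y i) \ A i) ≤ ENNReal.ofReal c'' * ν (A i) := by
    intro i
    rcases hpbad (Y i) with hb | he
    · have hsub : A i ⊆ finSMul S (A i) ∩ Y i :=
        Set.subset_inter (subset_finSMul hS.1 _) (hAsub i)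
      have hdecomp : ν (A i) + ν ((finSMul S (A i) ∩ Y i) \ A i) = ν (finSMul S (A i) ∩ Y i) := by
        rw [← measure_union (Set.disjoint_left.2 fun x hx1 hx2 => hx2.2 hx1) (((measurableSet_finSMul hmeas S (hAm i)).inter (hYm i)).diff (hAm i))]
        rw [Set.union_diff_self, Set.union_eq_self_of_subset_left hsub]
      have hle : ν (A i) + ν ((finSMul S (A i) ∩ Y i) \ A i) ≤
          ν (A i) + ENNReal.ofReal c'' * ν (A i) := by
        rw [hdecomp]
        calc ν (finSMul S (A i) ∩ Y i) ≤ (1 + ENNReal.ofReal c'') * ν (A i) := hb.2.2.2.2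
          _ = ν (A i) + ENNReal.ofReal c'' * ν (A i) := by ring
      exact (ENNReal.add_le_add_iff_left (measure_ne_top ν _)).1 hle
    · show ν ((finSMul S (pick (Y i)) ∩ Y i) \ pick (Y i)) ≤ _
      rw [he]
      simp [finSMul_empty]
  have hperU : ∀ (W : Set X) (i : ℕ), Un i ∪ A i ⊆ W →
      finSMul S (A i) \ W ⊆ (finSMul S (A i) ∩ Y i) \ A i := by
    intro W i hW x hx
    refine ⟨⟨hx.1, ?_⟩, fun hxa => hx.2 (hW (Or.inr hxa))⟩
    rw [hYeq i]
    exact ⟨trivial, fun hxu => hx.2 (hW (Or.inl hxu))⟩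
  -- the partial unions are thin
  have hthinUn : ∀ n, ν (finSMul S (Un n) \ Un n) ≤ ENNReal.ofReal c'' * ν (Un n) := by
    intro n
    have hcov : finSMul S (Un n) \ Un n ⊆
        ⋃ i ∈ Finset.range n, ((finSMul S (A i) ∩ Y i) \ A i) := by
      have hUneq : finSMul S (Un n) = ⋃ i ∈ Finset.range n, finSMul S (A i) := by
        show finSMul S (⋃ i ∈ Finset.range n, A i) = _
        exact finSMul_biUnion _ _
      rw [hUneq]
      intro x hx
      obtain ⟨hx1, hx2⟩ := hx
      rw [Set.mem_iUnion₂] at hx1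
      obtain ⟨i, hi, hxi⟩ := hx1
      rw [Set.mem_iUnion₂]
      refine ⟨i, hi, hperU (Un n) i ?_ ⟨hxi, hx2⟩⟩
      refine Set.union_subset (hUnmono (le_of_lt (Finset.mem_range.1 hi))) ?_
      intro y hy
      show y ∈ ⋃ i ∈ Finset.range n, A i
      exact Set.mem_biUnion hi hy
    calc ν (finSMul S (Un n) \ Un n)
        ≤ ν (⋃ i ∈ Finset.range n, ((finSMul S (A i) ∩ Y i) \ A i)) := measure_mono hcov
      _ ≤ ∑ i ∈ Finset.range n, ν ((finSMul S (A i) ∩ Y i) \ A i) :=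
          measure_biUnion_finset_le _ _
      _ ≤ ∑ i ∈ Finset.range n, ENNReal.ofReal c'' * ν (A i) :=
          Finset.sum_le_sum fun i _ => hper i
      _ = ENNReal.ofReal c'' * ∑ i ∈ Finset.range n, ν (A i) := by
          rw [Finset.mul_sum]
      _ = ENNReal.ofReal c'' * ν (Un n) := by
          rw [hUn, measure_biUnion_finset ?_ (fun i _ => hAm i)]
          intro i hi j hj hij
          rcases Nat.lt_or_ge i j with h | h
          · exact hdisj i j h
          · exact (hdisj j i (lt_of_le_of_ne h (Ne.symm hij))).symm
  -- the removed mass stays below α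
  have half_le : (1:ℝ≥0∞)/2 ≤ ENNReal.ofReal (1/2) := by
    rw [ENNReal.ofReal_div_of_pos (by norm_num)]
    simp [ENNReal.ofReal_one, ENNReal.ofReal_ofNat]
  have hUn_lt : ∀ n, ν (Un n) < ENNReal.ofReal α := by
    intro n; induction n with
    | zero =>
      have : ν (Un 0) = 0 := by simp [hUn]
      rw [this]
      simpa using hα0
    | succ m ih =>
      have hle34 : ν (Un (m+1)) ≤ ENNReal.ofReal (3/4) := by
        have h1 : ν (Un (m+1)) ≤ ν (Un m) + ν (A m) := by
          rw [hUnsucc]; exact measure_union_le _ _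
        have h2 : ν (A m) ≤ 1/2 := by
          rcases hpbad (Y m) with hb | he
          · refine hb.2.2.2.1.trans ?_
            exact ENNReal.div_le_div_right prob_le_one 2
          · show ν (pick (Y m)) ≤ _
            rw [he]; simp
        calc ν (Un (m+1)) ≤ ENNReal.ofReal α + 1/2 := h1.trans (add_le_add ih.le h2)
          _ ≤ ENNReal.ofReal (1/8) + ENNReal.ofReal (1/2) :=
              add_le_add (ENNReal.ofReal_le_ofReal hα) half_le
          _ = ENNReal.ofReal (1/8 + 1/2) := (ENNReal.ofReal_add (by norm_num) (by norm_num)).symm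
          _ ≤ ENNReal.ofReal (3/4) := ENNReal.ofReal_le_ofReal (by norm_num)
      exact hc''P (Un (m+1)) (hUnm (m+1)) hle34 (hthinUn (m+1))
  have hUUn : U = ⋃ n, Un n := by
    apply Set.Subset.antisymm
    · intro x hx
      rw [hU] at hx
      obtain ⟨i, hi⟩ := Set.mem_iUnion.1 hx
      exact Set.mem_iUnion.2 ⟨i+1, Set.mem_biUnion (Finset.mem_range.2 (Nat.lt_succ_self i)) hi⟩
    · exact Set.iUnion_subset fun n => hUnU n
  have hUle : ν U ≤ ENNReal.ofReal α := by
    rw [hUUn]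
    have := tendsto_measure_iUnion_atTop (μ := ν) hUnmono
    exact le_of_tendsto this (Filter.Eventually.of_forall fun n => (hUn_lt n).le)
  -- tail of the removed mass tends to zero
  have htailsub : ∀ n, MeasurableSet (U \ Un n) := fun n => hUm.diff (hUnm n)
  have htail : Filter.Tendsto (fun n => ν (U \ Un n)) Filter.atTop (nhds 0) := by
    have hanti : Antitone (fun n => U \ Un n) := fun m n hmn =>
      Set.diff_subset_diff_right (hUnmono hmn)
    have hiInter : (⋂ n, U \ Un n) = ∅ := by
      rw [Set.eq_empty_iff_forall_notMem]
      intro x hx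
      rw [Set.mem_iInter] at hx
      obtain ⟨i, hi⟩ := Set.mem_iUnion.1 ((hx 0).1)
      exact (hx (i+1)).2 (Set.mem_biUnion (Finset.mem_range.2 (Nat.lt_succ_self i)) hi)
    have := tendsto_measure_iInter_atTop (μ := ν)
      (fun n => (htailsub n).nullMeasurableSet) hanti ⟨0, measure_ne_top ν _⟩
    rw [hiInter] at this
    simpa [Function.comp_def] using this
  -- the domain
  refine ⟨Set.univ \ U, MeasurableSet.univ.diff hUm, ?_, ?_, c''/2, by positivity, ?_⟩
  · have : Set.univ \ (Set.univ \ U) = U := by simp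
    rw [this]; exact hUle
  · have h1 : (1:ℝ≥0∞) ≤ ν (Set.univ \ U) + ν U := by
      rw [← measure_univ (μ := ν)]
      have hcov2 : (Set.univ : Set X) ⊆ (Set.univ \ U) ∪ U := by
        rw [Set.diff_union_self]
        exact Set.subset_union_left
      exact (measure_mono hcov2).trans (measure_union_le _ _)
    have h2 : ENNReal.ofReal (1-α) + ENNReal.ofReal α ≤ ν (Set.univ \ U) + ENNReal.ofReal α := by
      calc ENNReal.ofReal (1-α) + ENNReal.ofReal α = ENNReal.ofReal 1 := by
            rw [← ENNReal.ofReal_add (by linarith) hα0.le]; norm_num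
        _ = 1 := by simp
        _ ≤ ν (Set.univ \ U) + ν U := h1
        _ ≤ ν (Set.univ \ U) + ENNReal.ofReal α := add_le_add_right hUle _
    exact (ENNReal.add_le_add_iff_right ENNReal.ofReal_ne_top).1 h2
  -- expansion on the domain
  intro B hBm hBD hB0 hBhalf
  by_contra hcon
  push_neg at hcon
  set D : Set X := Set.univ \ U with hD
  have hDY : ∀ n, D ⊆ Y n := by
    intro n
    rw [hYeq n]
    exact Set.diff_subset_diff_right (hUnU n)
  have hYnD : ∀ n, Y n \ D ⊆ U \ Un n := by
    intro n x hx
    rw [hYeq n] at hx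
    obtain ⟨⟨_, hx1⟩, hx2⟩ := hx
    rw [hD] at hx2
    simp only [Set.mem_diff, Set.mem_univ, true_and, not_not] at hx2
    exact ⟨hx2, hx1⟩
  -- B is a bad set for every late stage
  have hεpos : (0:ℝ≥0∞) < ENNReal.ofReal (c''/2) * ν B :=
    ENNReal.mul_pos (by simp [ENNReal.ofReal_pos]; positivity) hB0.ne'
  rw [ENNReal.tendsto_atTop_zero] at htail
  obtain ⟨N1, hN1⟩ := htail _ hεpos
  have hBbad : ∀ n, N1 ≤ n → Bad (Y n) B := by
    intro n hn
    refine ⟨hBm, hBD.trans (hDY n), hB0, ?_, ?_⟩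
    · exact hBhalf.trans (ENNReal.div_le_div_right (measure_mono (hDY n)) 2)
    · have hsplit : finSMul S B ∩ Y n ⊆ (finSMul S B ∩ D) ∪ (Y n \ D) := by
        intro x hx
        by_cases hxD : x ∈ D
        · exact Or.inl ⟨hx.1, hxD⟩
        · exact Or.inr ⟨hx.2, hxD⟩
      calc ν (finSMul S B ∩ Y n) ≤ ν ((finSMul S B ∩ D) ∪ (Y n \ D)) := measure_mono hsplit
        _ ≤ ν (finSMul S B ∩ D) + ν (Y n \ D) := measure_union_le _ _
        _ ≤ (1 + ENNReal.ofReal (c''/2)) * ν B + ν (U \ Un n) :=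
            add_le_add hcon (measure_mono (hYnD n))
        _ ≤ (1 + ENNReal.ofReal (c''/2)) * ν B + ENNReal.ofReal (c''/2) * ν B :=
            add_le_add_right (hN1 n hn) _
        _ = (1 + (ENNReal.ofReal (c''/2) + ENNReal.ofReal (c''/2))) * ν B := by ring
        _ = (1 + ENNReal.ofReal c'') * ν B := by
            rw [← ENNReal.ofReal_add (by linarith) (by linarith)]
            norm_num
  -- but late picked sets are too small
  have hBfin : ν B ≠ ∞ := measure_ne_top ν B
  have hquarter : (0:ℝ≥0∞) < ν B / 4 := ENNReal.div_pos hB0.ne' (by norm_num)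
  obtain ⟨N2, hN2⟩ := htail _ hquarter
  set n := max N1 N2 with hn
  have hAn_small : ν (A n) ≤ ν B / 4 := by
    refine le_trans (measure_mono ?_) (hN2 n (le_max_right _ _))
    intro x hx
    refine ⟨Set.mem_iUnion.2 ⟨n, hx⟩, ?_⟩
    intro hxUn
    have := hAsub n hx
    rw [hYeq n] at this
    exact this.2 hxUn
  have hBle : ν B ≤ 2 * ν (A n) := hpmax (Y n) B (hBbad n (le_max_left _ _))
  have : ν B ≤ ν B / 2 := by
    calc ν B ≤ 2 * ν (A n) := hBle
      _ ≤ 2 * (ν B / 4) := mul_le_mul_right hAn_small _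
      _ = ν B / 2 := by
          have h24 : (2:ℝ≥0∞) * 4⁻¹ = 2⁻¹ := by
            rw [show (4:ℝ≥0∞) = 2*2 by norm_num,
              ENNReal.mul_inv (Or.inl (by norm_num)) (Or.inl (by norm_num)), ← mul_assoc,
              ENNReal.mul_inv_cancel (by norm_num) (by norm_num), one_mul]
          rw [div_eq_mul_inv, div_eq_mul_inv, mul_comm 2 (ν B * 4⁻¹), mul_assoc,
            mul_comm (4:ℝ≥0∞)⁻¹ 2, h24]
  exact absurd this (not_le.2 (ENNReal.half_lt_self hB0.ne' hBfin))
end Greedy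
section UnionLemma
variable {Γ X : Type*} [Group Γ] [MulAction Γ X] [MeasurableSpace X]
  (ν : Measure X) [IsProbabilityMeasure ν]

lemma ofReal_half_mul (x : ℝ≥0∞) {r : ℝ} (hr : 0 ≤ r) :
    ENNReal.ofReal (r/2) * x = ENNReal.ofReal r * (x/2) := by
  rw [div_eq_mul_inv r 2, ENNReal.ofReal_mul hr, div_eq_mul_inv x 2, mul_assoc,
    mul_comm (ENNReal.ofReal 2⁻¹) x]
  congr 2
  rw [ENNReal.ofReal_inv_of_pos (by norm_num)]
  norm_num

set_option maxHeartbeats 1000000 in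
lemma union_domains (hmeas : ∀ γ : Γ, Measurable fun x : X => γ • x)
    (hmcp : MeasClassPres Γ ν) {S : Finset Γ} (hS : SymmFin S)
    {Y Y' : Set X} (hYm : MeasurableSet Y) (hY'm : MeasurableSet Y')
    {c c' : ℝ} (hc : 0 < c) (hc' : 0 < c')
    (hY78 : ENNReal.ofReal (7/8) ≤ ν Y) (hY'78 : ENNReal.ofReal (7/8) ≤ ν Y')
    (hE : ExpandsOn ν Y c S) (hE' : ExpandsOn ν Y' c' S) :
    ∃ c2 : ℝ, 0 < c2 ∧ ExpandsOn ν (Y ∪ Y') c2 S := by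
  set cm : ℝ := min c c' with hcm
  have hcm0 : 0 < cm := lt_min hc hc'
  set θ : ℝ := 3 * cm / 16 with hθ
  have hθ0 : 0 < θ := by positivity
  obtain ⟨κ, hκ0, hκP⟩ := modulus ν hmeas hmcp S hθ0
  set c2 : ℝ := min (cm/2) κ with hc2
  have hc20 : 0 < c2 := lt_min (by positivity) hκ0
  refine ⟨c2, hc20, ?_⟩
  have halfle : (1:ℝ≥0∞)/2 ≤ ENNReal.ofReal (1/2) := by
    rw [ENNReal.ofReal_div_of_pos (by norm_num)]
    simp [ENNReal.ofReal_one, ENNReal.ofReal_ofNat]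
  intro A hAm hAW hA0 hAhalf
  have hAfin : ν A ≠ ∞ := measure_ne_top ν A
  have hA12 : ν A ≤ ENNReal.ofReal (1/2) := by
    refine le_trans (hAhalf.trans ?_) halfle
    exact ENNReal.div_le_div_right prob_le_one 2
  -- the main engine, run on whichever side holds at least half of A
  have main : ∀ (U : Set X) (cU : ℝ), 0 < cU → MeasurableSet U → U ⊆ Y ∪ Y' →
      ExpandsOn ν U cU S → cm ≤ cU → ENNReal.ofReal (7/8) ≤ ν U →
      ν A / 2 ≤ ν (A ∩ U) →
      (1 + ENNReal.ofReal c2) * ν A < ν (finSMul S A ∩ (Y ∪ Y')) := by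
    intro U cU hcU0 hUm hUW hEU hcmU hU78 hhalfA
    set P : Set X := A ∩ U with hP
    have hPm : MeasurableSet P := hAm.inter hUm
    have hP0 : 0 < ν P := lt_of_lt_of_le (ENNReal.div_pos hA0.ne' (by norm_num)) hhalfA
    by_cases hPcase : ν P ≤ ν U / 2
    · -- main case: expand P inside U
      have hexp := hEU P hPm Set.inter_subset_right hP0 hPcase
      set G : Set X := (finSMul S P ∩ U) \ A with hG
      have hGm : MeasurableSet G :=
        ((measurableSet_finSMul hmeas S hPm).inter hUm).diff hAm
      have hGgt : ENNReal.ofReal cU * ν P < ν G := by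
        have hds : ν ((finSMul S P ∩ U) ∩ A) + ν G = ν (finSMul S P ∩ U) :=
          measure_inter_add_diff _ hAm
        have hsub : (finSMul S P ∩ U) ∩ A ⊆ P := fun x hx => ⟨hx.2, hx.1.2⟩
        have h1 : (1 + ENNReal.ofReal cU) * ν P < ν P + ν G := by
          calc (1 + ENNReal.ofReal cU) * ν P < ν (finSMul S P ∩ U) := hexp
            _ = ν ((finSMul S P ∩ U) ∩ A) + ν G := hds.symm
            _ ≤ ν P + ν G := add_le_add_left (measure_mono hsub) _
        rw [add_mul, one_mul] at h1
        exact (ENNReal.add_lt_add_iff_left (measure_ne_top ν P)).1 h1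
      have hunion : A ∪ G ⊆ finSMul S A ∩ (Y ∪ Y') := by
        refine Set.union_subset (Set.subset_inter (subset_finSMul hS.1 A) hAW) ?_
        refine Set.subset_inter ?_ (fun x hx => hUW hx.1.2)
        exact fun x hx => finSMul_mono_set Set.inter_subset_left hx.1.1
      have hdisjAG : Disjoint A G := Set.disjoint_left.2 fun x hxA hxG => hxG.2 hxA
      calc (1 + ENNReal.ofReal c2) * ν A = ν A + ENNReal.ofReal c2 * ν A := by
            rw [add_mul, one_mul]
        _ ≤ ν A + ENNReal.ofReal cU * (ν A / 2) := by
            refine add_le_add_right ?_ _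
            calc ENNReal.ofReal c2 * ν A ≤ ENNReal.ofReal (cU/2) * ν A := by
                  refine mul_le_mul_left (ENNReal.ofReal_le_ofReal ?_) _
                  calc c2 ≤ cm/2 := min_le_left _ _
                    _ ≤ cU/2 := by linarith
              _ = ENNReal.ofReal cU * (ν A / 2) := ofReal_half_mul _ hcU0.le
        _ ≤ ν A + ENNReal.ofReal cU * ν P := by
            exact add_le_add_right (mul_le_mul_right hhalfA _) _
        _ < ν A + ν G := by
            exact (ENNReal.add_lt_add_iff_left hAfin).2 hGgt
        _ = ν (A ∪ G) := (measure_union hdisjAG hGm).symm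
        _ ≤ ν (finSMul S A ∩ (Y ∪ Y')) := measure_mono hunion
    · -- edge case: expand the complement of A inside U
      push_neg at hPcase
      set C : Set X := U \ A with hC
      have hCm : MeasurableSet C := hUm.diff hAm
      have hCP : ν C + ν P = ν U := by
        rw [hC, hP, Set.inter_comm]
        rw [add_comm]
        exact measure_inter_add_diff U hAm
      have hC12 : ν C ≤ ν U / 2 := by
        by_contra hCbig
        push_neg at hCbig
        have : ν U < ν C + ν P := by
          calc ν U = ν U / 2 + ν U / 2 := (ENNReal.add_halves _).symm
            _ < ν C + ν P := ENNReal.add_lt_add hCbig hPcase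
        rw [hCP] at this
        exact lt_irrefl _ this
      have hC38 : ENNReal.ofReal (3/8) ≤ ν C := by
        have h1 : ENNReal.ofReal (3/8) + ENNReal.ofReal (1/2) ≤ ν C + ENNReal.ofReal (1/2) := by
          calc ENNReal.ofReal (3/8) + ENNReal.ofReal (1/2) = ENNReal.ofReal (7/8) := by
                rw [← ENNReal.ofReal_add (by norm_num) (by norm_num)]; norm_num
            _ ≤ ν U := hU78
            _ = ν C + ν P := hCP.symm
            _ ≤ ν C + ENNReal.ofReal (1/2) := by
                refine add_le_add_right ?_ _
                exact (measure_mono Set.inter_subset_left).trans hA12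
        exact (ENNReal.add_le_add_iff_right ENNReal.ofReal_ne_top).1 h1
      have hC0 : 0 < ν C := lt_of_lt_of_le (ENNReal.ofReal_pos.2 (by norm_num)) hC38
      have hexp := hEU C hCm Set.diff_subset hC0 hC12
      set I : Set X := (finSMul S C ∩ U) \ C with hI
      have hIm : MeasurableSet I := ((measurableSet_finSMul hmeas S hCm).inter hUm).diff hCm
      have hIgt : ENNReal.ofReal (2*θ) < ν I := by
        have hsubC : C ⊆ finSMul S C ∩ U :=
          Set.subset_inter (subset_finSMul hS.1 C) Set.diff_subset
        have hds : ν C + ν I = ν (finSMul S C ∩ U) := by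
          rw [← measure_union (Set.disjoint_left.2 fun x hx1 hx2 => hx2.2 hx1) hIm,
            Set.union_diff_self, Set.union_eq_self_of_subset_left hsubC]
        have h1 : ν C + ENNReal.ofReal cU * ν C < ν C + ν I := by
          calc ν C + ENNReal.ofReal cU * ν C = (1 + ENNReal.ofReal cU) * ν C := by
                rw [add_mul, one_mul]
            _ < ν (finSMul S C ∩ U) := hexp
            _ = ν C + ν I := hds.symm
        have h2 : ENNReal.ofReal cU * ν C < ν I :=
          (ENNReal.add_lt_add_iff_left (measure_ne_top ν C)).1 h1
        refine lt_of_le_of_lt ?_ h2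
        calc ENNReal.ofReal (2*θ) = ENNReal.ofReal cm * ENNReal.ofReal (3/8) := by
              rw [← ENNReal.ofReal_mul hcm0.le]
              congr 1
              rw [hθ]; ring
          _ ≤ ENNReal.ofReal cU * ν C :=
              mul_le_mul' (ENNReal.ofReal_le_ofReal hcmU) hC38
      set Z : Set X := C ∩ finSMul S I with hZ
      have hZm : MeasurableSet Z := hCm.inter (measurableSet_finSMul hmeas S hIm)
      have hICS : I ⊆ finSMul S C := fun x hx => hx.1.1
      have hIZ : I ⊆ finSMul S Z := by
        rw [hZ]
        exact symm_trick (C := C) (I := I) hS.2 hICS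
      have hZgt : ENNReal.ofReal κ < ν Z := by
        by_contra hle
        push_neg at hle
        have h1 : ν (finSMul S Z) ≤ ENNReal.ofReal θ := hκP Z hZm hle
        have h2 : ν I ≤ ENNReal.ofReal θ := (measure_mono hIZ).trans h1
        have h3 : ENNReal.ofReal (2*θ) < ENNReal.ofReal θ := lt_of_lt_of_le hIgt h2
        rw [ENNReal.ofReal_lt_ofReal_iff hθ0] at h3
        linarith
      have hIA : I ⊆ A := by
        intro x hx
        by_contra hxA
        exact hx.2 ⟨hx.1.2, hxA⟩
      have hunion : A ∪ Z ⊆ finSMul S A ∩ (Y ∪ Y') := by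
        refine Set.union_subset (Set.subset_inter (subset_finSMul hS.1 A) hAW) ?_
        refine Set.subset_inter ?_ (fun x hx => hUW hx.1.1)
        exact fun x hx => finSMul_mono_set hIA hx.2
      have hdisjAZ : Disjoint A Z := Set.disjoint_left.2 fun x hxA hxZ => hxZ.1.2 hxA
      calc (1 + ENNReal.ofReal c2) * ν A = ν A + ENNReal.ofReal c2 * ν A := by
            rw [add_mul, one_mul]
        _ ≤ ν A + ENNReal.ofReal κ := by
            refine add_le_add_right ?_ _
            calc ENNReal.ofReal c2 * ν A ≤ ENNReal.ofReal κ * 1 :=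
                  mul_le_mul' (ENNReal.ofReal_le_ofReal (min_le_right _ _)) prob_le_one
              _ = ENNReal.ofReal κ := mul_one _
        _ < ν A + ν Z := (ENNReal.add_lt_add_iff_left hAfin).2 hZgt
        _ = ν (A ∪ Z) := (measure_union hdisjAZ hZm).symm
        _ ≤ ν (finSMul S A ∩ (Y ∪ Y')) := measure_mono hunion
  -- pick the bigger side
  have hsplit : ν A ≤ ν (A ∩ Y) + ν (A ∩ Y') := by
    calc ν A = ν ((A ∩ Y) ∪ (A ∩ Y')) := by rw [← Set.inter_union_distrib_left,
          Set.inter_eq_self_of_subset_left hAW]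
      _ ≤ ν (A ∩ Y) + ν (A ∩ Y') := measure_union_le _ _
  by_cases hside : ν (A ∩ Y') ≤ ν (A ∩ Y)
  · refine main Y c hc hYm Set.subset_union_left hE (min_le_left _ _) hY78 ?_
    rw [ENNReal.div_le_iff (by norm_num) (by norm_num)]
    calc ν A ≤ ν (A ∩ Y) + ν (A ∩ Y) := hsplit.trans (add_le_add_right hside _)
      _ = ν (A ∩ Y) * 2 := by ring
  · push_neg at hside
    refine main Y' c' hc' hY'm Set.subset_union_right hE' (min_le_right _ _) hY'78 ?_
    rw [ENNReal.div_le_iff (by norm_num) (by norm_num)]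
    calc ν A ≤ ν (A ∩ Y') + ν (A ∩ Y') := hsplit.trans (add_le_add_left hside.le _)
      _ = ν (A ∩ Y') * 2 := by ring
end UnionLemma
section Backward
variable {Γ X : Type*} [Group Γ] [MulAction Γ X] [MeasurableSpace X]
  (ν : Measure X) [IsProbabilityMeasure ν]

set_option maxHeartbeats 1000000 in
lemma backward_dir (hmeas : ∀ γ : Γ, Measurable fun x : X => γ • x)
    (hmcp : MeasClassPres Γ ν) {S : Finset Γ} (hS : SymmFin S)
    (Yseq : ℕ → Set X) (cseq : ℕ → ℝ) (hmono : Monotone Yseq)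
    (hYm : ∀ n, MeasurableSet (Yseq n)) (hconull : ν (Set.univ \ ⋃ n, Yseq n) = 0)
    (hdom : ∀ n, 0 < cseq n ∧ 0 < ν (Yseq n) ∧ ExpandsOn ν (Yseq n) (cseq n) S) :
    ∀ α : ℝ, 0 < α → α ≤ 1 / 2 →
      ∃ cf : ℝ, 0 < cf ∧ AsymExpandsOn ν Set.univ α cf S := by
  intro α hα0 hα12
  have halfle : (1:ℝ≥0∞)/2 ≤ ENNReal.ofReal (1/2) := by
    rw [ENNReal.ofReal_div_of_pos (by norm_num)]
    simp [ENNReal.ofReal_one, ENNReal.ofReal_ofNat]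
  -- find a stage with almost full measure
  have hUeq : ν (⋃ n, Yseq n) = 1 := by
    refine le_antisymm prob_le_one ?_
    have h1 : (1:ℝ≥0∞) = ν (Set.univ : Set X) := (measure_univ (μ := ν)).symm
    rw [h1]
    calc ν (Set.univ : Set X) ≤ ν (⋃ n, Yseq n) + ν (Set.univ \ ⋃ n, Yseq n) := by
          refine (measure_mono ?_).trans (measure_union_le _ _)
          intro x _
          by_cases hx : x ∈ ⋃ n, Yseq n
          · exact Or.inl hx
          · exact Or.inr ⟨trivial, hx⟩
      _ = ν (⋃ n, Yseq n) := by rw [hconull, add_zero]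
  have hsup : ⨆ n, ν (Yseq n) = 1 := by
    rw [← hUeq]
    exact (Directed.measure_iUnion (hmono.directed_le)).symm
  have hlt1 : ENNReal.ofReal (1 - α/8) < ⨆ n, ν (Yseq n) := by
    rw [hsup]
    exact ENNReal.ofReal_lt_one.2 (by linarith)
  obtain ⟨n, hn⟩ := lt_iSup_iff.1 hlt1
  obtain ⟨hc0, hY0, hE⟩ := hdom n
  set Y : Set X := Yseq n with hYdef
  set c : ℝ := cseq n with hcdef
  have hYmeas : MeasurableSet Y := hYm n
  -- the complement of Y is small
  have hcompl : ν (Set.univ \ Y) ≤ ENNReal.ofReal (α/4) := by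
    by_contra hbig
    push_neg at hbig
    have h1 : (1:ℝ≥0∞) < ν (Set.univ \ Y) + ν Y := by
      calc (1:ℝ≥0∞) = ENNReal.ofReal (α/8) + ENNReal.ofReal (1 - α/8) := by
            rw [← ENNReal.ofReal_add (by linarith) (by linarith)]
            norm_num
        _ ≤ ENNReal.ofReal (α/4) + ENNReal.ofReal (1 - α/8) :=
            add_le_add_left (ENNReal.ofReal_le_ofReal (by linarith)) _
        _ < ν (Set.univ \ Y) + ENNReal.ofReal (1 - α/8) :=
            (ENNReal.add_lt_add_iff_right ENNReal.ofReal_ne_top).2 hbig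
        _ ≤ ν (Set.univ \ Y) + ν Y := add_le_add_right hn.le _
    have h2 : ν (Set.univ \ Y) + ν Y = 1 := by
      rw [Set.diff_eq, Set.univ_inter, add_comm, measure_add_measure_compl hYmeas]
      exact measure_univ
    rw [h2] at h1
    exact lt_irrefl _ h1
  have hY78 : ENNReal.ofReal (7/8) ≤ ν Y :=
    le_trans (ENNReal.ofReal_le_ofReal (by linarith)) hn.le
  -- modulus constant
  set θ : ℝ := 3 * c / 16 with hθ
  have hθ0 : 0 < θ := by positivity
  obtain ⟨κ, hκ0, hκP⟩ := modulus ν hmeas hmcp S hθ0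
  set cf : ℝ := min (3*c*α/4) κ with hcf
  refine ⟨cf, lt_min (by positivity) hκ0, ?_⟩
  intro A hAm _ hAge hAle
  rw [measure_univ, mul_one] at hAge
  rw [measure_univ] at hAle
  have hAfin : ν A ≠ ∞ := measure_ne_top ν A
  have hA12 : ν A ≤ ENNReal.ofReal (1/2) := hAle.trans halfle
  set B : Set X := A ∩ Y with hB
  have hBm : MeasurableSet B := hAm.inter hYmeas
  have hB34 : ENNReal.ofReal (3*α/4) ≤ ν B := by
    have h1 : ν A ≤ ν B + ENNReal.ofReal (α/4) := by
      calc ν A = ν (A ∩ Y) + ν (A \ Y) := (measure_inter_add_diff A hYmeas).symm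
        _ ≤ ν B + ν (Set.univ \ Y) := by
            refine add_le_add_right (measure_mono ?_) _
            intro x hx
            exact ⟨trivial, hx.2⟩
        _ ≤ ν B + ENNReal.ofReal (α/4) := add_le_add_right hcompl _
    have h2 : ENNReal.ofReal (3*α/4) + ENNReal.ofReal (α/4) ≤ ν B + ENNReal.ofReal (α/4) := by
      calc ENNReal.ofReal (3*α/4) + ENNReal.ofReal (α/4) = ENNReal.ofReal α := by
            rw [← ENNReal.ofReal_add (by linarith) (by linarith)]
            congr 1; ring
        _ ≤ ν A := hAge
        _ ≤ ν B + ENNReal.ofReal (α/4) := h1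
    exact (ENNReal.add_le_add_iff_right ENNReal.ofReal_ne_top).1 h2
  have hB0 : 0 < ν B := lt_of_lt_of_le (ENNReal.ofReal_pos.2 (by positivity)) hB34
  by_cases hBcase : ν B ≤ ν Y / 2
  · -- main case
    have hexp := hE B hBm Set.inter_subset_right hB0 hBcase
    set O : Set X := (finSMul S B ∩ Y) \ B with hO
    have hOm : MeasurableSet O := ((measurableSet_finSMul hmeas S hBm).inter hYmeas).diff hBm
    have hOgt : ENNReal.ofReal c * ν B < ν O := by
      have hsubB : B ⊆ finSMul S B ∩ Y :=
        Set.subset_inter (subset_finSMul hS.1 B) Set.inter_subset_right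
      have hds : ν B + ν O = ν (finSMul S B ∩ Y) := by
        rw [← measure_union (Set.disjoint_left.2 fun x hx1 hx2 => hx2.2 hx1) hOm,
          Set.union_diff_self, Set.union_eq_self_of_subset_left hsubB]
      have h1 : ν B + ENNReal.ofReal c * ν B < ν B + ν O := by
        calc ν B + ENNReal.ofReal c * ν B = (1 + ENNReal.ofReal c) * ν B := by
              rw [add_mul, one_mul]
          _ < ν (finSMul S B ∩ Y) := hexp
          _ = ν B + ν O := hds.symm
      exact (ENNReal.add_lt_add_iff_left (measure_ne_top ν B)).1 h1
    have hdisjAO : Disjoint A O := by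
      refine Set.disjoint_left.2 fun x hxA hxO => hxO.2 ⟨hxA, hxO.1.2⟩
    have hunion : A ∪ O ⊆ finSMul S A ∩ Set.univ := by
      rw [Set.inter_univ]
      refine Set.union_subset (subset_finSMul hS.1 A) ?_
      exact fun x hx => finSMul_mono_set Set.inter_subset_left hx.1.1
    calc (1 + ENNReal.ofReal cf) * ν A = ν A + ENNReal.ofReal cf * ν A := by
          rw [add_mul, one_mul]
      _ ≤ ν A + ENNReal.ofReal (3*c*α/4) := by
          refine add_le_add_right ?_ _
          calc ENNReal.ofReal cf * ν A ≤ ENNReal.ofReal (3*c*α/4) * 1 :=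
                mul_le_mul' (ENNReal.ofReal_le_ofReal (min_le_left _ _)) prob_le_one
            _ = ENNReal.ofReal (3*c*α/4) := mul_one _
      _ = ν A + ENNReal.ofReal c * ENNReal.ofReal (3*α/4) := by
          rw [← ENNReal.ofReal_mul hc0.le]
          congr 2
          ring
      _ ≤ ν A + ENNReal.ofReal c * ν B := add_le_add_right (mul_le_mul_right hB34 _) _
      _ < ν A + ν O := (ENNReal.add_lt_add_iff_left hAfin).2 hOgt
      _ = ν (A ∪ O) := (measure_union hdisjAO hOm).symm
      _ ≤ ν (finSMul S A ∩ Set.univ) := measure_mono hunion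
  · -- edge case
    push_neg at hBcase
    set C : Set X := Y \ A with hC
    have hCm : MeasurableSet C := hYmeas.diff hAm
    have hCB : ν C + ν B = ν Y := by
      rw [hC, hB, Set.inter_comm, add_comm]
      exact measure_inter_add_diff Y hAm
    have hC12 : ν C ≤ ν Y / 2 := by
      by_contra hCbig
      push_neg at hCbig
      have : ν Y < ν C + ν B := by
        calc ν Y = ν Y / 2 + ν Y / 2 := (ENNReal.add_halves _).symm
          _ < ν C + ν B := ENNReal.add_lt_add hCbig hBcase
      rw [hCB] at this
      exact lt_irrefl _ this
    have hC38 : ENNReal.ofReal (3/8) ≤ ν C := by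
      have h1 : ENNReal.ofReal (3/8) + ENNReal.ofReal (1/2) ≤ ν C + ENNReal.ofReal (1/2) := by
        calc ENNReal.ofReal (3/8) + ENNReal.ofReal (1/2) = ENNReal.ofReal (7/8) := by
              rw [← ENNReal.ofReal_add (by norm_num) (by norm_num)]; norm_num
          _ ≤ ν Y := hY78
          _ = ν C + ν B := hCB.symm
          _ ≤ ν C + ENNReal.ofReal (1/2) := by
              refine add_le_add_right ((measure_mono Set.inter_subset_left).trans hA12) _
      exact (ENNReal.add_le_add_iff_right ENNReal.ofReal_ne_top).1 h1
    have hC0 : 0 < ν C := lt_of_lt_of_le (ENNReal.ofReal_pos.2 (by norm_num)) hC38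
    have hexp := hE C hCm Set.diff_subset hC0 hC12
    set I : Set X := (finSMul S C ∩ Y) \ C with hI
    have hIm : MeasurableSet I := ((measurableSet_finSMul hmeas S hCm).inter hYmeas).diff hCm
    have hIgt : ENNReal.ofReal (2*θ) < ν I := by
      have hsubC : C ⊆ finSMul S C ∩ Y :=
        Set.subset_inter (subset_finSMul hS.1 C) Set.diff_subset
      have hds : ν C + ν I = ν (finSMul S C ∩ Y) := by
        rw [← measure_union (Set.disjoint_left.2 fun x hx1 hx2 => hx2.2 hx1) hIm,
          Set.union_diff_self, Set.union_eq_self_of_subset_left hsubC]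
      have h1 : ν C + ENNReal.ofReal c * ν C < ν C + ν I := by
        calc ν C + ENNReal.ofReal c * ν C = (1 + ENNReal.ofReal c) * ν C := by
              rw [add_mul, one_mul]
          _ < ν (finSMul S C ∩ Y) := hexp
          _ = ν C + ν I := hds.symm
      have h2 : ENNReal.ofReal c * ν C < ν I :=
        (ENNReal.add_lt_add_iff_left (measure_ne_top ν C)).1 h1
      refine lt_of_le_of_lt ?_ h2
      calc ENNReal.ofReal (2*θ) = ENNReal.ofReal c * ENNReal.ofReal (3/8) := by
            rw [← ENNReal.ofReal_mul hc0.le]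
            congr 1
            rw [hθ]; ring
        _ ≤ ENNReal.ofReal c * ν C := mul_le_mul_right hC38 _
    set Z : Set X := C ∩ finSMul S I with hZ
    have hZm : MeasurableSet Z := hCm.inter (measurableSet_finSMul hmeas S hIm)
    have hICS : I ⊆ finSMul S C := fun x hx => hx.1.1
    have hIZ : I ⊆ finSMul S Z := by
      rw [hZ]
      exact symm_trick (C := C) (I := I) hS.2 hICS
    have hZgt : ENNReal.ofReal κ < ν Z := by
      by_contra hle
      push_neg at hle
      have h2 : ν I ≤ ENNReal.ofReal θ := (measure_mono hIZ).trans (hκP Z hZm hle)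
      have h3 : ENNReal.ofReal (2*θ) < ENNReal.ofReal θ := lt_of_lt_of_le hIgt h2
      rw [ENNReal.ofReal_lt_ofReal_iff hθ0] at h3
      linarith
    have hIA : I ⊆ A := by
      intro x hx
      by_contra hxA
      exact hx.2 ⟨hx.1.2, hxA⟩
    have hdisjAZ : Disjoint A Z := Set.disjoint_left.2 fun x hxA hxZ => hxZ.1.2 hxA
    have hunion : A ∪ Z ⊆ finSMul S A ∩ Set.univ := by
      rw [Set.inter_univ]
      refine Set.union_subset (subset_finSMul hS.1 A) ?_
      exact fun x hx => finSMul_mono_set hIA hx.2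
    calc (1 + ENNReal.ofReal cf) * ν A = ν A + ENNReal.ofReal cf * ν A := by
          rw [add_mul, one_mul]
      _ ≤ ν A + ENNReal.ofReal κ := by
          refine add_le_add_right ?_ _
          calc ENNReal.ofReal cf * ν A ≤ ENNReal.ofReal κ * 1 :=
                mul_le_mul' (ENNReal.ofReal_le_ofReal (min_le_right _ _)) prob_le_one
            _ = ENNReal.ofReal κ := mul_one _
      _ < ν A + ν Z := (ENNReal.add_lt_add_iff_left hAfin).2 hZgt
      _ = ν (A ∪ Z) := (measure_union hdisjAZ hZm).symm
      _ ≤ ν (finSMul S A ∩ Set.univ) := measure_mono hunion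
end Backward
section Forward
variable {Γ X : Type*} [Group Γ] [MulAction Γ X] [MeasurableSpace X]
  (ν : Measure X) [IsProbabilityMeasure ν]

lemma forward_dir [DecidableEq Γ] (hmeas : ∀ γ : Γ, Measurable fun x : X => γ • x)
    (hmcp : MeasClassPres Γ ν) {S : Finset Γ} (hS : SymmFin S)
    (hgen : Subgroup.closure (S : Set Γ) = ⊤) (hAE : AsymExpDomain Γ ν Set.univ) :
    ∃ (Yseq : ℕ → Set X) (cseq : ℕ → ℝ),
      Monotone Yseq ∧ (∀ n, MeasurableSet (Yseq n)) ∧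
      ν (Set.univ \ ⋃ n, Yseq n) = 0 ∧
      ∀ n, 0 < cseq n ∧ 0 < ν (Yseq n) ∧ ExpandsOn ν (Yseq n) (cseq n) S := by
  have hDn : ∀ n : ℕ, ∃ D : Set X, MeasurableSet D ∧
      ν (Set.univ \ D) ≤ ENNReal.ofReal ((1/8)*(1/2)^n) ∧
      ENNReal.ofReal (1 - (1/8)*(1/2)^n) ≤ ν D ∧
      ∃ c : ℝ, 0 < c ∧ ExpandsOn ν D c S := by
    intro n
    refine greedy ν hmeas hmcp hS hgen hAE (α := (1/8)*(1/2)^n) (by positivity) ?_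
    have h1 : ((1:ℝ)/2)^n ≤ 1 := pow_le_one₀ (by norm_num) (by norm_num)
    nlinarith
  choose D hDm hDc hDge cD hcD0 hcDE using hDn
  have hD78 : ∀ n, ENNReal.ofReal (7/8) ≤ ν (D n) := by
    intro n
    refine le_trans (ENNReal.ofReal_le_ofReal ?_) (hDge n)
    have h1 : ((1:ℝ)/2)^n ≤ 1 := pow_le_one₀ (by norm_num) (by norm_num)
    nlinarith
  set Yb : ℕ → Set X := fun n => ⋃ i ∈ Finset.range (n+1), D i with hYb
  have hYbm : ∀ n, MeasurableSet (Yb n) := fun n =>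
    (Finset.range (n+1)).measurableSet_biUnion fun i _ => hDm i
  have hYbmono : Monotone Yb := by
    intro m n hmn
    exact Set.biUnion_subset_biUnion_left (Finset.range_subset_range.2 (by omega))
  have hDYb : ∀ n, D n ⊆ Yb n := fun n =>
    Set.subset_biUnion_of_mem (Finset.self_mem_range_succ n)
  have hD0Yb : ∀ n, D 0 ⊆ Yb n := fun n =>
    Set.subset_biUnion_of_mem (Finset.mem_range.2 (by omega))
  have hYb78 : ∀ n, ENNReal.ofReal (7/8) ≤ ν (Yb n) := fun n =>
    (hD78 0).trans (measure_mono (hD0Yb n))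
  have hYbsucc : ∀ n, Yb (n+1) = Yb n ∪ D (n+1) := by
    intro n
    simp only [hYb, Finset.range_add_one (n := n+1), Finset.set_biUnion_insert]
    exact Set.union_comm _ _
  have hdom : ∀ n, ∃ c2 : ℝ, 0 < c2 ∧ ExpandsOn ν (Yb n) c2 S := by
    intro n
    induction n with
    | zero =>
      refine ⟨cD 0, hcD0 0, ?_⟩
      have h0 : Yb 0 = D 0 := by
        simp [hYb]
      rw [h0]
      exact hcDE 0
    | succ m ih =>
      obtain ⟨c2, hc20, hE2⟩ := ih
      obtain ⟨c3, hc30, hE3⟩ := union_domains ν hmeas hmcp hS (hYbm m) (hDm (m+1))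
        hc20 (hcD0 (m+1)) (hYb78 m) (hD78 (m+1)) hE2 (hcDE (m+1))
      refine ⟨c3, hc30, ?_⟩
      rw [hYbsucc m]
      exact hE3
  choose cb hcb0 hcbE using hdom
  refine ⟨Yb, cb, hYbmono, hYbm, ?_, fun n =>
    ⟨hcb0 n, lt_of_lt_of_le (ENNReal.ofReal_pos.2 (by norm_num)) (hYb78 n), hcbE n⟩⟩
  -- conull union
  have hbound : ∀ n, ν (Set.univ \ ⋃ m, Yb m) ≤ ENNReal.ofReal ((1/8)*(1/2)^n) := by
    intro n
    refine le_trans (measure_mono ?_) (hDc n)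
    refine Set.diff_subset_diff_right ((hDYb n).trans ?_)
    exact Set.subset_iUnion Yb n
  have htends : Filter.Tendsto (fun n : ℕ => ENNReal.ofReal ((1/8)*(1/2)^n))
      Filter.atTop (nhds 0) := by
    have h1 : Filter.Tendsto (fun n : ℕ => (1/8)*((1:ℝ)/2)^n) Filter.atTop (nhds 0) := by
      have := tendsto_pow_atTop_nhds_zero_of_lt_one (by norm_num : (0:ℝ) ≤ 1/2) (by norm_num)
      simpa using this.const_mul (1/8 : ℝ)
    have h2 := (ENNReal.continuous_ofReal.tendsto 0).comp h1
    simpa [Function.comp_def] using h2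
  have hle0 : ν (Set.univ \ ⋃ m, Yb m) ≤ 0 := ge_of_tendsto' htends hbound
  exact le_antisymm hle0 zero_le
end Forward


/-- Corollary 4.10: for a measure-class-preserving action on a
probability space of a group generated by a finite symmetric set `S ∋ 1`, asymptotic
expansion in measure is equivalent to the existence of an exhaustion of `X` by domains of
`S`-expansion. -/
theorem quantitative_structure_theorem_fg
    {Γ X : Type*} [Group Γ] [Countable Γ] [MulAction Γ X] [MeasurableSpace X]
    (ν : Measure X) [IsProbabilityMeasure ν]
    (hmeas : ∀ γ : Γ, Measurable fun x : X => γ • x)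
    (hmcp : MeasClassPres Γ ν)
    (S : Finset Γ) (hS : SymmFin S) (hgen : Subgroup.closure (S : Set Γ) = ⊤) :
    AsymExpDomain Γ ν Set.univ ↔
      ∃ (Yseq : ℕ → Set X) (cseq : ℕ → ℝ),
        Monotone Yseq ∧ (∀ n, MeasurableSet (Yseq n)) ∧
        ν (Set.univ \ ⋃ n, Yseq n) = 0 ∧
        ∀ n, 0 < cseq n ∧ 0 < ν (Yseq n) ∧ ExpandsOn ν (Yseq n) (cseq n) S    := by
  classical
  constructor
  · intro hAE
    exact forward_dir ν hmeas hmcp hS hgen hAE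
  · rintro ⟨Yseq, cseq, hmono, hYm, hconull, hdom⟩
    intro α hα0 hα12
    obtain ⟨cf, hcf0, hcf⟩ :=
      backward_dir ν hmeas hmcp hS Yseq cseq hmono hYm hconull hdom α hα0 hα12
    exact ⟨cf, hcf0, S, hS, hcf⟩
end

section
/- Let (T_n, d_n) be a sequence of finite metric spaces, each equipped with a probability measure ν_n, such that the sequence has uniformly bounded measure ratios (there exists Q ≥ 1 with (1/Q) ≤ ν_n({v})/ν_n({w}) ≤ Q for all points v, w ∈ T_n and all n) and |T_n| → ∞. Then the following are equivalent: (i) there exist functions c̄ : (0,1/2] → ℝ_{>0} and k̄ : (0,1/2] → ℕ such that for every n, every α ∈ (0,1/2] and every subset A ⊆ T_n with α ≤ ν_n(A) ≤ 1/2 one has ν_n(N_{k̄(α)}(A)) > (1+c̄(α))·ν_n(A) (the spaces are a sequence of measured asymptotic expanders); (ii) there exist functions c : (0,1/2] → ℝ_{>0} and k : (0,1/2] → ℕ such that for every n, every α ∈ (0,1/2] and every subset A ⊆ T_n with α·|T_n| ≤ |A| ≤ |T_n|/2 one has |N_{k(α)}(A)| > (1+c(α))·|A| (the underlying metric spaces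 are a sequence of asymptotic expanders). -/
open MeasureTheory Filter



universe u

namespace AsympExpAux

variable {X : Type u} [MetricSpace X]

def Nbd (r : ℝ) (A : Set X) : Set X := {x | ∃ a ∈ A, dist x a ≤ r}

lemma subset_nbd {r : ℝ} (hr : 0 ≤ r) (A : Set X) : A ⊆ Nbd r A :=
  fun x hx => ⟨x, hx, by simpa using hr⟩

lemma nbd_mono {r s : ℝ} (hrs : r ≤ s) {A B : Set X} (hAB : A ⊆ B) :
    Nbd r A ⊆ Nbd s B := fun x hx => by
  obtain ⟨a, ha, hd⟩ := hx
  exact ⟨a, hAB ha, hd.trans hrs⟩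

lemma nbd_nbd {r s : ℝ} {A : Set X} : Nbd r (Nbd s A) ⊆ Nbd (r + s) A := by
  rintro x ⟨y, ⟨a, ha, hya⟩, hxy⟩
  exact ⟨a, ha, (dist_triangle x y a).trans (add_le_add hxy hya)⟩

lemma nbd_compl {r s : ℝ} {B : Set X} :
    Nbd r ((Nbd (r + s) B)ᶜ) ⊆ (Nbd s B)ᶜ := by
  rintro x ⟨y, hy, hxy⟩ ⟨b, hb, hxb⟩
  refine hy ⟨b, hb, (dist_triangle y x b).trans (add_le_add ?_ hxb)⟩
  rwa [dist_comm]

structure Good (μ : Set X → ℝ) : Prop where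
  mono : ∀ {A B : Set X}, A ⊆ B → μ A ≤ μ B
  compl : ∀ A : Set X, μ Aᶜ = μ Set.univ - μ A
  nonneg : ∀ A : Set X, 0 ≤ μ A
  pos : 0 < μ Set.univ

lemma stage1 (c : ℝ) (k : ℕ) (hc : 0 < c) (α : ℝ) (hα : 0 < α) :
    ∃ K : ℕ, ∀ (X : Type u) [MetricSpace X] (μ : Set X → ℝ), Good μ →
      (∀ A : Set X, α * μ Set.univ ≤ μ A → μ A ≤ μ Set.univ / 2 →
        (1 + c) * μ A < μ (Nbd (k : ℝ) A)) →
      ∀ A : Set X, α * μ Set.univ ≤ μ A → μ Set.univ / 2 < μ (Nbd ((K : ℕ) : ℝ) A) := by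
  obtain ⟨J, hJ⟩ := pow_unbounded_of_one_lt (R := ℝ) (1 / (2 * α)) (by linarith : (1:ℝ) < 1 + c)
  refine ⟨J * k, ?_⟩
  intro X _ μ hG hexp A hA
  set M := μ Set.univ with hM
  have hMpos := hG.pos
  have main : ∀ j : ℕ, (1 + c) ^ j * (α * M) ≤ μ (Nbd ((j * k : ℕ) : ℝ) A) ∨
      M / 2 < μ (Nbd ((j * k : ℕ) : ℝ) A) := by
    intro j
    induction j with
    | zero =>
      left
      have : A ⊆ Nbd ((0 * k : ℕ) : ℝ) A := subset_nbd (by norm_num) A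
      simpa using hA.trans (hG.mono this)
    | succ j ih =>
      have hsub2 : Nbd ((j * k : ℕ) : ℝ) A ⊆ Nbd (((j + 1) * k : ℕ) : ℝ) A :=
        nbd_mono (by exact_mod_cast Nat.mul_le_mul_right k (Nat.le_succ j)) subset_rfl
      have hsub : Nbd (k : ℝ) (Nbd ((j * k : ℕ) : ℝ) A) ⊆ Nbd (((j + 1) * k : ℕ) : ℝ) A := by
        have h1 := nbd_nbd (r := (k : ℝ)) (s := ((j * k : ℕ) : ℝ)) (A := A)
        have hcast : ((k : ℝ) + ((j * k : ℕ) : ℝ)) = (((j + 1) * k : ℕ) : ℝ) := by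
          push_cast; ring
        rwa [hcast] at h1
      rcases ih with h | h
      · by_cases hB : μ (Nbd ((j * k : ℕ) : ℝ) A) ≤ M / 2
        · left
          have hpowone : (1:ℝ) ≤ (1 + c) ^ j := one_le_pow₀ (by linarith)
          have h1 : α * M ≤ μ (Nbd ((j * k : ℕ) : ℝ) A) := by
            nlinarith [mul_pos hα hMpos]
          have h2 := hexp _ h1 hB
          have h3 : μ (Nbd (k : ℝ) (Nbd ((j * k : ℕ) : ℝ) A)) ≤
              μ (Nbd (((j + 1) * k : ℕ) : ℝ) A) := hG.mono hsub
          have h4 : (1 + c) * ((1 + c) ^ j * (α * M)) ≤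
              (1 + c) * μ (Nbd ((j * k : ℕ) : ℝ) A) := by nlinarith
          calc (1 + c) ^ (j + 1) * (α * M) = (1 + c) * ((1 + c) ^ j * (α * M)) := by ring
            _ ≤ (1 + c) * μ (Nbd ((j * k : ℕ) : ℝ) A) := h4
            _ ≤ μ (Nbd (((j + 1) * k : ℕ) : ℝ) A) := le_trans (le_of_lt h2) h3
        · right
          exact lt_of_lt_of_le (lt_of_not_ge hB) (hG.mono hsub2)
      · right
        exact lt_of_lt_of_le h (hG.mono hsub2)
  rcases main J with h | h
  · have h1 : M / 2 < (1 + c) ^ J * (α * M) := by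
      have h2 := mul_lt_mul_of_pos_right hJ (mul_pos hα hMpos)
      have h3 : 1 / (2 * α) * (α * M) = M / 2 := by field_simp
      linarith [h3 ▸ h2]
    exact lt_of_lt_of_le h1 h
  · exact h

lemma stage2 (c : ℝ) (k : ℕ) (hc : 0 < c) (ε : ℝ) (hε : 0 < ε) :
    ∃ K : ℕ, ∀ (X : Type u) [MetricSpace X] (μ : Set X → ℝ), Good μ →
      (∀ A : Set X, ε * μ Set.univ ≤ μ A → μ A ≤ μ Set.univ / 2 →
        (1 + c) * μ A < μ (Nbd (k : ℝ) A)) →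
      ∀ B : Set X, μ Set.univ / 2 < μ B → (1 - ε) * μ Set.univ < μ (Nbd ((K : ℕ) : ℝ) B) := by
  obtain ⟨J, hJ⟩ := pow_unbounded_of_one_lt (R := ℝ) (1 / ε) (by linarith : (1:ℝ) < 1 + c)
  refine ⟨J * k, ?_⟩
  intro X _ μ hG hexp B hB
  set M := μ Set.univ with hM
  have hMpos := hG.pos
  set S : ℕ → Set X := fun j => (Nbd ((j * k : ℕ) : ℝ) B)ᶜ with hS
  have hS0 : ∀ j, μ (S j) < M / 2 := by
    intro j
    have h1 : B ⊆ Nbd ((j * k : ℕ) : ℝ) B := subset_nbd (by positivity) B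
    have h2 : S j ⊆ Bᶜ := Set.compl_subset_compl.mpr h1
    have h3 : μ (S j) ≤ μ Bᶜ := hG.mono h2
    rw [hG.compl B] at h3
    linarith
  have hSsub : ∀ j, Nbd (k : ℝ) (S (j + 1)) ⊆ S j := by
    intro j
    have hcast : (((j + 1) * k : ℕ) : ℝ) = (k : ℝ) + ((j * k : ℕ) : ℝ) := by push_cast; ring
    have h0 := nbd_compl (r := (k : ℝ)) (s := ((j * k : ℕ) : ℝ)) (B := B)
    show Nbd (k : ℝ) ((Nbd (((j + 1) * k : ℕ) : ℝ) B)ᶜ) ⊆ (Nbd ((j * k : ℕ) : ℝ) B)ᶜ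
    rw [hcast]; exact h0
  have hSmono : ∀ j, S (j + 1) ⊆ S j := by
    intro j
    refine Set.compl_subset_compl.mpr (nbd_mono ?_ subset_rfl)
    exact_mod_cast Nat.mul_le_mul_right k (Nat.le_succ j)
  have main : ∀ j : ℕ, μ (S j) < ε * M ∨ (1 + c) ^ j * μ (S j) ≤ M / 2 := by
    intro j
    induction j with
    | zero => right; simpa using (hS0 0).le
    | succ j ih =>
      rcases ih with h | h
      · left; exact lt_of_le_of_lt (hG.mono (hSmono j)) h
      · by_cases hSe : μ (S (j + 1)) < ε * M
        · left; exact hSe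
        · right
          have h1 : ε * M ≤ μ (S (j + 1)) := le_of_not_gt hSe
          have h2 := hexp _ h1 (hS0 (j + 1)).le
          have h3 : μ (Nbd (k : ℝ) (S (j + 1))) ≤ μ (S j) := hG.mono (hSsub j)
          have h4 : (1 + c) * μ (S (j + 1)) ≤ μ (S j) := le_trans (le_of_lt h2) h3
          have hpownn : (0:ℝ) ≤ (1 + c) ^ j := by positivity
          calc (1 + c) ^ (j + 1) * μ (S (j + 1)) = (1 + c) ^ j * ((1 + c) * μ (S (j + 1))) := by
                ring
            _ ≤ (1 + c) ^ j * μ (S j) := by nlinarith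
            _ ≤ M / 2 := h
  have hfin : μ (S J) < ε * M := by
    rcases main J with h | h
    · exact h
    · by_contra hcon
      push_neg at hcon
      have h1 : (1 + c) ^ J * (ε * M) ≤ M / 2 := by
        have hpownn : (0:ℝ) ≤ (1 + c) ^ J := by positivity
        nlinarith
      have h2 : 1 / ε * (ε * M) < (1 + c) ^ J * (ε * M) :=
        mul_lt_mul_of_pos_right hJ (mul_pos hε hMpos)
      have h3 : 1 / ε * (ε * M) = M := by field_simp
      linarith
  have hcompl := hG.compl (Nbd ((J * k : ℕ) : ℝ) B)
  have : μ (S J) = M - μ (Nbd ((J * k : ℕ) : ℝ) B) := by simpa [hS] using hcompl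
  nlinarith

lemma key (c : ℝ → ℝ) (k : ℝ → ℕ) (α ε : ℝ) (hα : 0 < α) (hα2 : α ≤ 1 / 2)
    (hε : 0 < ε) (hε2 : ε ≤ 1 / 2) (hcα : 0 < c α) (hcε : 0 < c ε) :
    ∃ K : ℕ, ∀ (X : Type u) [MetricSpace X] (μ : Set X → ℝ), Good μ →
      (∀ β : ℝ, 0 < β → β ≤ 1 / 2 → ∀ A : Set X, β * μ Set.univ ≤ μ A →
        μ A ≤ μ Set.univ / 2 → (1 + c β) * μ A < μ (Nbd ((k β : ℕ) : ℝ) A)) →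
      ∀ A : Set X, α * μ Set.univ ≤ μ A → (1 - ε) * μ Set.univ < μ (Nbd ((K : ℕ) : ℝ) A) := by
  obtain ⟨K1, hK1⟩ := stage1.{u} (c α) (k α) hcα α hα
  obtain ⟨K2, hK2⟩ := stage2.{u} (c ε) (k ε) hcε ε hε
  refine ⟨K1 + K2, ?_⟩
  intro X _ μ hG hexp A hA
  have h1 := hK1 X μ hG (fun A h1 h2 => hexp α hα hα2 A h1 h2) A hA
  have h2 := hK2 X μ hG (fun A h1 h2 => hexp ε hε hε2 A h1 h2) _ h1
  have hsub : Nbd ((K2 : ℕ) : ℝ) (Nbd ((K1 : ℕ) : ℝ) A) ⊆ Nbd ((K1 + K2 : ℕ) : ℝ) A := by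
    have h3 := nbd_nbd (r := ((K2 : ℕ) : ℝ)) (s := ((K1 : ℕ) : ℝ)) (A := A)
    have hcast : (((K2 : ℕ) : ℝ) + ((K1 : ℕ) : ℝ)) = ((K1 + K2 : ℕ) : ℝ) := by push_cast; ring
    rwa [hcast] at h3
  exact lt_of_lt_of_le h2 (hG.mono hsub)

end AsympExpAux

namespace AsympExpAux

variable {Y : Type u} [Fintype Y] [MeasurableSpace Y] [MeasurableSingletonClass Y]

lemma meas_eq_sum (μ : Measure Y) (A : Set Y) : μ A = ∑ x ∈ A.toFinite.toFinset, μ {x} := by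
  have h1 : A = ⋃ x ∈ A.toFinite.toFinset, {x} := by ext y; simp [Set.Finite.mem_toFinset]
  calc μ A = μ (⋃ x ∈ A.toFinite.toFinset, {x}) := by rw [← h1]
    _ = ∑ x ∈ A.toFinite.toFinset, μ {x} :=
      measure_biUnion_finset (fun i _ j _ hij => Set.disjoint_singleton.mpr hij)
        (fun b _ => measurableSet_singleton b)

lemma nonempty_of_prob (μ : Measure Y) [IsProbabilityMeasure μ] : Nonempty Y := by
  by_contra h
  have h2 : (Set.univ : Set Y) = ∅ := Set.univ_eq_empty_iff.mpr (not_nonempty_iff.mp h)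
  have h3 : μ Set.univ = 1 := measure_univ
  rw [h2, measure_empty] at h3
  exact zero_ne_one h3

lemma card_bounds (μ : Measure Y) [IsProbabilityMeasure μ] (Q : ℝ) (hQ : 1 ≤ Q)
    (hratio : ∀ v w : Y, μ {v} ≤ ENNReal.ofReal Q * μ {w}) (A : Set Y) :
    (A.ncard : ℝ) ≤ Q * Fintype.card Y * (μ A).toReal ∧
      (μ A).toReal ≤ Q * A.ncard / Fintype.card Y := by
  have hne : Nonempty Y := nonempty_of_prob μ
  have hQ0 : (0:ℝ) < Q := by linarith
  set m : ℕ := Fintype.card Y with hm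
  have hm0 : (0:ℝ) < m := by exact_mod_cast Fintype.card_pos
  set νr : Y → ℝ := fun x => (μ {x}).toReal with hνr
  have hB1 : ∀ B : Set Y, (μ B).toReal = ∑ x ∈ B.toFinite.toFinset, νr x := by
    intro B
    rw [meas_eq_sum μ B, ENNReal.toReal_sum]
    intro a _
    exact measure_ne_top μ _
  have hB2 : ∑ x : Y, νr x = 1 := by
    have := hB1 Set.univ
    simpa [measure_univ] using this.symm
  have hB3 : ∀ v w : Y, νr v ≤ Q * νr w := by
    intro v w
    have h1 := hratio v w
    have h2 : ((ENNReal.ofReal Q * μ {w}).toReal) = Q * νr w := by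
      rw [ENNReal.toReal_mul, ENNReal.toReal_ofReal hQ0.le]
    have h3 := ENNReal.toReal_mono (by finiteness) h1
    rwa [h2] at h3
  have hνrnn : ∀ v, 0 ≤ νr v := fun v => ENNReal.toReal_nonneg
  have hub : ∀ v, νr v ≤ Q / m := by
    intro v
    have h1 : (m : ℝ) * νr v = ∑ _w : Y, νr v := by
      rw [Finset.sum_const, Finset.card_univ, nsmul_eq_mul, hm]
    have h2 : ∑ _w : Y, νr v ≤ ∑ w : Y, Q * νr w :=
      Finset.sum_le_sum fun w _ => hB3 v w
    have h3 : ∑ w : Y, Q * νr w = Q := by rw [← Finset.mul_sum, hB2, mul_one]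
    rw [le_div_iff₀ hm0]
    nlinarith
  have hlb : ∀ v, 1 / (Q * m) ≤ νr v := by
    intro v
    have h1 : (1:ℝ) = ∑ w : Y, νr w := hB2.symm
    have h2 : ∑ w : Y, νr w ≤ ∑ _w : Y, Q * νr v :=
      Finset.sum_le_sum fun w _ => hB3 w v
    have h3 : ∑ _w : Y, Q * νr v = m * (Q * νr v) := by
      rw [Finset.sum_const, Finset.card_univ, nsmul_eq_mul, hm]
    rw [div_le_iff₀ (by positivity)]
    nlinarith
  have hcard : (A.ncard : ℝ) = (A.toFinite.toFinset.card : ℝ) := by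
    rw [Set.ncard_eq_toFinset_card A A.toFinite]
  constructor
  · have h1 : (A.toFinite.toFinset.card : ℝ) * (1 / (Q * m)) ≤ ∑ x ∈ A.toFinite.toFinset, νr x := by
      have := Finset.card_nsmul_le_sum A.toFinite.toFinset νr (1 / (Q * m)) fun x _ => hlb x
      simpa [nsmul_eq_mul] using this
    rw [hB1, hcard]
    rw [mul_one_div, div_le_iff₀ (by positivity : (0:ℝ) < Q * m)] at h1
    nlinarith [h1]
  · have h1 : ∑ x ∈ A.toFinite.toFinset, νr x ≤ (A.toFinite.toFinset.card : ℝ) * (Q / m) := by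
      have := Finset.sum_le_card_nsmul A.toFinite.toFinset νr (Q / m) fun x _ => hub x
      simpa [nsmul_eq_mul] using this
    rw [hB1, hcard]
    rw [← mul_div_assoc, le_div_iff₀ hm0] at h1
    rw [le_div_iff₀ hm0]
    nlinarith [h1]

end AsympExpAux

/-- Lemma 7.5: a sequence of finite probability metric spaces with
uniformly bounded measure ratios and cardinalities tending to infinity is a sequence of
measured asymptotic expanders iff the underlying metric spaces are a sequence of
asymptotic expanders. -/
theorem measured_asymptotic_expanders_iff_asymptotic_expanders
    (T : ℕ → Type*) [∀ n, MetricSpace (T n)] [∀ n, Fintype (T n)]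
    [∀ n, MeasurableSpace (T n)] [∀ n, MeasurableSingletonClass (T n)]
    (ν : ∀ n, Measure (T n)) (hprob : ∀ n, IsProbabilityMeasure (ν n))
    (Q : ℝ) (hQ : 1 ≤ Q)
    (hratio : ∀ (n : ℕ) (v w : T n), ν n {v} ≤ ENNReal.ofReal Q * ν n {w})
    (hcard : Tendsto (fun n => Fintype.card (T n)) atTop atTop) :
    (∃ (c : ℝ → ℝ) (k : ℝ → ℕ), ∀ α : ℝ, 0 < α → α ≤ 1 / 2 → 0 < c α ∧
        ∀ (n : ℕ) (A : Set (T n)), ENNReal.ofReal α ≤ ν n A → ν n A ≤ 1 / 2 →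
          (1 + ENNReal.ofReal (c α)) * ν n A <
            ν n {x : T n | ∃ a ∈ A, dist x a ≤ (k α : ℝ)}) ↔
      (∃ (c : ℝ → ℝ) (k : ℝ → ℕ), ∀ α : ℝ, 0 < α → α ≤ 1 / 2 → 0 < c α ∧
        ∀ (n : ℕ) (A : Set (T n)),
          α * (Fintype.card (T n) : ℝ) ≤ (A.ncard : ℝ) →
          (A.ncard : ℝ) ≤ (Fintype.card (T n) : ℝ) / 2 →
          (1 + c α) * (A.ncard : ℝ) <
            (({x : T n | ∃ a ∈ A, dist x a ≤ (k α : ℝ)} : Set (T n)).ncard : ℝ)) := by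
  classical
  have hQ0 : (0:ℝ) < Q := by linarith
  have hne : ∀ n, Nonempty (T n) := fun n => AsympExpAux.nonempty_of_prob (ν n)
  have hMr : ∀ n, ((ν n) Set.univ).toReal = 1 := by
    intro n; rw [measure_univ, ENNReal.toReal_one]
  have hMc : ∀ n, ((Set.univ : Set (T n)).ncard : ℝ) = (Fintype.card (T n) : ℝ) := by
    intro n; rw [Set.ncard_univ, Nat.card_eq_fintype_card]
  have hGoodr : ∀ n, AsympExpAux.Good (fun A : Set (T n) => ((ν n) A).toReal) := by
    intro n
    have hmeas : ∀ B : Set (T n), MeasurableSet B := fun B => B.toFinite.measurableSet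
    refine ⟨?_, ?_, fun A => ENNReal.toReal_nonneg, ?_⟩
    · intro A B hAB
      exact ENNReal.toReal_mono (measure_ne_top _ _) (measure_mono hAB)
    · intro A
      have h1 := measure_add_measure_compl (μ := ν n) (hmeas A)
      rw [measure_univ] at h1
      have h2 : ((ν n) A).toReal + ((ν n) Aᶜ).toReal = 1 := by
        rw [← ENNReal.toReal_add (measure_ne_top _ _) (measure_ne_top _ _), h1,
          ENNReal.toReal_one]
      show ((ν n) Aᶜ).toReal = ((ν n) Set.univ).toReal - ((ν n) A).toReal
      rw [hMr n]; linarith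
    · show (0:ℝ) < ((ν n) Set.univ).toReal
      rw [hMr n]; norm_num
  have hGoodc : ∀ n, AsympExpAux.Good (fun A : Set (T n) => (A.ncard : ℝ)) := by
    intro n
    refine ⟨?_, ?_, fun A => Nat.cast_nonneg _, ?_⟩
    · intro A B hAB
      exact_mod_cast Set.ncard_le_ncard hAB (Set.toFinite B)
    · intro A
      have h1 := Set.ncard_add_ncard_compl A
      show ((Aᶜ.ncard : ℕ) : ℝ) = ((Set.univ : Set (T n)).ncard : ℝ) - (A.ncard : ℝ)
      rw [hMc n, Nat.card_eq_fintype_card] at *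
      have h2 : ((A.ncard : ℕ) : ℝ) + ((Aᶜ.ncard : ℕ) : ℝ) = (Fintype.card (T n) : ℝ) := by
        exact_mod_cast congrArg (Nat.cast (R := ℝ)) h1
      linarith
    · show (0:ℝ) < ((Set.univ : Set (T n)).ncard : ℝ)
      rw [hMc n]
      exact_mod_cast Fintype.card_pos
  constructor
  · rintro ⟨c₀, k₀, h₀⟩
    have hexp_r : ∀ n, ∀ β : ℝ, 0 < β → β ≤ 1/2 → ∀ A : Set (T n),
        β * ((ν n) Set.univ).toReal ≤ ((ν n) A).toReal →
        ((ν n) A).toReal ≤ ((ν n) Set.univ).toReal / 2 →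
        (1 + c₀ β) * ((ν n) A).toReal <
          ((ν n) (AsympExpAux.Nbd ((k₀ β : ℕ) : ℝ) A)).toReal := by
      intro n β hβ1 hβ2 A h1 h2
      rw [hMr n] at h1 h2
      have hb1 : ENNReal.ofReal β ≤ (ν n) A := ENNReal.ofReal_le_of_le_toReal (by linarith)
      have hb2 : (ν n) A ≤ 1/2 := by
        refine (ENNReal.toReal_le_toReal (measure_ne_top _ _) (by norm_num)).mp ?_
        have hhalf : ((1:ENNReal)/2).toReal = 1/2 := by simp
        rw [hhalf]; linarith
      have h3 := (h₀ β hβ1 hβ2).2 n A hb1 hb2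
      have hcpos := (h₀ β hβ1 hβ2).1
      have hne1 : (1 + ENNReal.ofReal (c₀ β)) * (ν n) A ≠ ⊤ := by finiteness
      have h4 := (ENNReal.toReal_lt_toReal hne1 (measure_ne_top _ _)).mpr h3
      rw [ENNReal.toReal_mul, ENNReal.toReal_add ENNReal.one_ne_top ENNReal.ofReal_ne_top,
        ENNReal.toReal_one, ENNReal.toReal_ofReal hcpos.le] at h4
      exact h4
    have hkey : ∀ α : ℝ, ∃ K : ℕ, 0 < α → α ≤ 1/2 →
        ∀ (n : ℕ) (A : Set (T n)),
          (α / Q) * ((ν n) Set.univ).toReal ≤ ((ν n) A).toReal →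
          (1 - 1/(8*Q)) * ((ν n) Set.univ).toReal <
            ((ν n) (AsympExpAux.Nbd ((K : ℕ) : ℝ) A)).toReal := by
      intro α
      by_cases h : 0 < α ∧ α ≤ 1/2
      · obtain ⟨hα1, hα2⟩ := h
        have c1 : 0 < α / Q := by positivity
        have c2 : α / Q ≤ 1/2 := le_trans (div_le_self hα1.le hQ) hα2
        have c3 : (0:ℝ) < 1/(8*Q) := by positivity
        have c4 : 1/(8*Q) ≤ 1/2 := by
          rw [div_le_div_iff₀ (by positivity) (by norm_num)]; nlinarith
        obtain ⟨K, hK⟩ := AsympExpAux.key c₀ k₀ (α/Q) (1/(8*Q)) c1 c2 c3 c4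
          (h₀ _ c1 c2).1 (h₀ _ c3 c4).1
        exact ⟨K, fun _ _ n A hA =>
          hK (T n) (fun B => ((ν n) B).toReal) (hGoodr n) (hexp_r n) A hA⟩
      · exact ⟨0, fun h1 h2 => absurd ⟨h1, h2⟩ h⟩
    choose K hK using hkey
    refine ⟨fun _ => 1/4, K, ?_⟩
    intro α hα1 hα2
    refine ⟨by norm_num, ?_⟩
    intro n A hA1 hA2
    set m : ℝ := (Fintype.card (T n) : ℝ) with hm
    have hm0 : 0 < m := by rw [hm]; exact_mod_cast Fintype.card_pos
    have hb := AsympExpAux.card_bounds (ν n) Q hQ (hratio n) A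
    have h1 : (α / Q) * ((ν n) Set.univ).toReal ≤ ((ν n) A).toReal := by
      rw [hMr n, mul_one, div_le_iff₀ hQ0]
      nlinarith [hb.1, hA1, hm0]
    have h2 := hK α hα1 hα2 n A h1
    rw [hMr n, mul_one] at h2
    set Nb : Set (T n) := AsympExpAux.Nbd ((K α : ℕ) : ℝ) A with hNb
    have hbN := AsympExpAux.card_bounds (ν n) Q hQ (hratio n) Nbᶜ
    have h3 : ((ν n) Nbᶜ).toReal = 1 - ((ν n) Nb).toReal := by
      have h4 := (hGoodr n).compl Nb
      rw [hMr n] at h4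
      exact h4
    have h5 : (Nb.ncard : ℝ) + (Nbᶜ.ncard : ℝ) = m := by
      have := Set.ncard_add_ncard_compl Nb
      rw [Nat.card_eq_fintype_card] at this
      rw [hm]
      exact_mod_cast congrArg (Nat.cast (R := ℝ)) this
    have h6 : (Nbᶜ.ncard : ℝ) < m/8 := by
      have h7 : ((ν n) Nbᶜ).toReal < 1/(8*Q) := by rw [h3]; nlinarith [h2]
      calc (Nbᶜ.ncard : ℝ) ≤ Q * m * ((ν n) Nbᶜ).toReal := hbN.1
        _ < Q * m * (1/(8*Q)) := by nlinarith [mul_pos hQ0 hm0]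
        _ = m/8 := by field_simp
    show (1 + (1:ℝ)/4) * (A.ncard : ℝ) < (Nb.ncard : ℝ)
    linarith [h5, h6, hA2]
  · rintro ⟨c₀, k₀, h₀⟩
    have hexp_c : ∀ n, ∀ β : ℝ, 0 < β → β ≤ 1/2 → ∀ A : Set (T n),
        β * ((Set.univ : Set (T n)).ncard : ℝ) ≤ (A.ncard : ℝ) →
        (A.ncard : ℝ) ≤ ((Set.univ : Set (T n)).ncard : ℝ) / 2 →
        (1 + c₀ β) * (A.ncard : ℝ) <
          ((AsympExpAux.Nbd ((k₀ β : ℕ) : ℝ) A).ncard : ℝ) := by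
      intro n β h1 h2 A h3 h4
      rw [hMc n] at h3 h4
      exact (h₀ β h1 h2).2 n A h3 h4
    have hkey : ∀ α : ℝ, ∃ K : ℕ, 0 < α → α ≤ 1/2 →
        ∀ (n : ℕ) (A : Set (T n)),
          (α / Q) * ((Set.univ : Set (T n)).ncard : ℝ) ≤ (A.ncard : ℝ) →
          (1 - 1/(8*Q)) * ((Set.univ : Set (T n)).ncard : ℝ) <
            ((AsympExpAux.Nbd ((K : ℕ) : ℝ) A).ncard : ℝ) := by
      intro α
      by_cases h : 0 < α ∧ α ≤ 1/2
      · obtain ⟨hα1, hα2⟩ := h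
        have c1 : 0 < α / Q := by positivity
        have c2 : α / Q ≤ 1/2 := le_trans (div_le_self hα1.le hQ) hα2
        have c3 : (0:ℝ) < 1/(8*Q) := by positivity
        have c4 : 1/(8*Q) ≤ 1/2 := by
          rw [div_le_div_iff₀ (by positivity) (by norm_num)]; nlinarith
        obtain ⟨K, hK⟩ := AsympExpAux.key c₀ k₀ (α/Q) (1/(8*Q)) c1 c2 c3 c4
          (h₀ _ c1 c2).1 (h₀ _ c3 c4).1
        exact ⟨K, fun _ _ n A hA =>
          hK (T n) (fun B : Set (T n) => (B.ncard : ℝ)) (hGoodc n) (hexp_c n) A hA⟩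
      · exact ⟨0, fun h1 h2 => absurd ⟨h1, h2⟩ h⟩
    choose K hK using hkey
    refine ⟨fun _ => 1/4, K, ?_⟩
    intro α hα1 hα2
    refine ⟨by norm_num, ?_⟩
    intro n A hA1 hA2
    set m : ℝ := (Fintype.card (T n) : ℝ) with hm
    have hm0 : 0 < m := by rw [hm]; exact_mod_cast Fintype.card_pos
    have hb := AsympExpAux.card_bounds (ν n) Q hQ (hratio n) A
    have hA1' : α ≤ ((ν n) A).toReal := by
      have := ENNReal.toReal_mono (measure_ne_top _ _) hA1
      rwa [ENNReal.toReal_ofReal hα1.le] at this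
    have hA2' : ((ν n) A).toReal ≤ 1/2 := by
      have := ENNReal.toReal_mono (by norm_num : (1/2 : ENNReal) ≠ ⊤) hA2
      have hhalf : ((1:ENNReal)/2).toReal = 1/2 := by simp
      rwa [hhalf] at this
    have h1 : (α / Q) * ((Set.univ : Set (T n)).ncard : ℝ) ≤ (A.ncard : ℝ) := by
      rw [hMc n, ← hm, div_mul_eq_mul_div, div_le_iff₀ hQ0]
      have h1a : α * m ≤ Q * (A.ncard : ℝ) := by
        have h1b : α ≤ Q * (A.ncard : ℝ) / m := le_trans hA1' hb.2
        rw [le_div_iff₀ hm0] at h1b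
        linarith
      nlinarith [h1a]
    have h2 := hK α hα1 hα2 n A h1
    rw [hMc n, ← hm] at h2
    set Nb : Set (T n) := AsympExpAux.Nbd ((K α : ℕ) : ℝ) A with hNb
    have hbN := AsympExpAux.card_bounds (ν n) Q hQ (hratio n) Nbᶜ
    have h5 : (Nb.ncard : ℝ) + (Nbᶜ.ncard : ℝ) = m := by
      have := Set.ncard_add_ncard_compl Nb
      rw [Nat.card_eq_fintype_card] at this
      rw [hm]
      exact_mod_cast congrArg (Nat.cast (R := ℝ)) this
    have h6 : ((ν n) Nbᶜ).toReal < 1/8 := by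
      have hcN : (Nbᶜ.ncard : ℝ) < m/(8*Q) := by
        have hexpand : (1 - 1/(8*Q)) * m = m - m/(8*Q) := by ring
        rw [hexpand] at h2
        linarith
      calc ((ν n) Nbᶜ).toReal ≤ Q * (Nbᶜ.ncard : ℝ) / m := hbN.2
        _ < Q * (m/(8*Q)) / m := by gcongr
        _ = 1/8 := by field_simp
    have h3 : ((ν n) Nbᶜ).toReal = 1 - ((ν n) Nb).toReal := by
      have h4 := (hGoodr n).compl Nb
      rw [hMr n] at h4
      exact h4
    have h7 : (7:ℝ)/8 < ((ν n) Nb).toReal := by linarith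
    have hne1 : (1 + ENNReal.ofReal ((1:ℝ)/4)) * (ν n) A ≠ ⊤ := by finiteness
    refine (ENNReal.toReal_lt_toReal hne1 (measure_ne_top _ _)).mp ?_
    rw [ENNReal.toReal_mul, ENNReal.toReal_add ENNReal.one_ne_top ENNReal.ofReal_ne_top,
      ENNReal.toReal_one, ENNReal.toReal_ofReal (by norm_num : (0:ℝ) ≤ 1/4)]
    show (1 + (1:ℝ)/4) * ((ν n) A).toReal < ((ν n) Nb).toReal
    nlinarith [hA2', h7]
end
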